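/- arXiv:2409.07036 — 2 statements merged into one kernel-verified Lean document; each statement's English description precedes it below -/
import Mathlib

section
/- Every spherical convex body of constant width smaller than π/2 on S^d (d ≥ 2) is strictly convex. -/
open scoped RealInnerProductSpace
open Real

noncomputable section

/-- Points of the ambient Euclidean space `E^n`. -/
abbrev Pt (n : ℕ) := EuclideanSpace ℝ (Fin n)

/-- The unit sphere in `E^n`. -/
def uSphere (n : ℕ) : Set (Pt n) := {x | ‖x‖ = 1}

/-- Spherical (geodesic) distance between unit vectors. -/
def sdist {n : ℕ} (x y : Pt n) : ℝ := Real.arccos ⟪x, y⟫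

/-- `z` lies on the shorter great-circle arc connecting `x` and `y`. -/
def OnArc {n : ℕ} (x z y : Pt n) : Prop := sdist x z + sdist z y = sdist x y

/-- Spherical convexity: no pair of antipodes, and closed under shorter arcs. -/
def SphConvex {n : ℕ} (C : Set (Pt n)) : Prop :=
  C ⊆ uSphere n ∧ (∀ x ∈ C, -x ∉ C) ∧
    ∀ x ∈ C, ∀ y ∈ C, ∀ z ∈ uSphere n, OnArc x z y → z ∈ C

/-- Interior of a set relative to the unit sphere. -/
def sphInterior {n : ℕ} (C : Set (Pt n)) : Set (Pt n) :=
  {x | x ∈ C ∧ ∃ ε > 0, ∀ y ∈ uSphere n, sdist x y < ε → y ∈ C}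

/-- Boundary of a closed subset of the sphere. -/
def sphBoundary {n : ℕ} (C : Set (Pt n)) : Set (Pt n) := C \ sphInterior C

/-- A spherical convex body: closed, spherically convex, nonempty interior. -/
def SphConvexBody {n : ℕ} (C : Set (Pt n)) : Prop :=
  IsClosed C ∧ SphConvex C ∧ (sphInterior C).Nonempty

/-- Closed spherical ball of radius `ρ` centered at `c`. -/
def sBall {n : ℕ} (c : Pt n) (ρ : ℝ) : Set (Pt n) := {x | x ∈ uSphere n ∧ sdist c x ≤ ρ}

/-- Hemisphere with center `m`. -/
def Hemi {n : ℕ} (m : Pt n) : Set (Pt n) := sBall m (π/2)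

/-- `Hemi m` supports the body `C`. -/
def Supports {n : ℕ} (m : Pt n) (C : Set (Pt n)) : Prop :=
  ‖m‖ = 1 ∧ C ⊆ Hemi m ∧ ∃ p ∈ C, sdist m p = π/2

/-- `Hemi m` supports the body `C` at the point `p`. -/
def SupportsAt {n : ℕ} (m : Pt n) (C : Set (Pt n)) (p : Pt n) : Prop :=
  ‖m‖ = 1 ∧ C ⊆ Hemi m ∧ p ∈ C ∧ sdist m p = π/2

/-- The lune `Hemi g ∩ Hemi h`. -/
def Lune {n : ℕ} (g h : Pt n) : Set (Pt n) := Hemi g ∩ Hemi h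

/-- `g, h` determine a genuine lune. -/
def IsLune {n : ℕ} (g h : Pt n) : Prop := ‖g‖ = 1 ∧ ‖h‖ = 1 ∧ g ≠ h ∧ g ≠ -h

/-- Center of the `(d-1)`-dimensional hemisphere `G/H` bounding the lune
`Hemi g ∩ Hemi h` and contained in `Hemi g` (i.e. on the great sphere `bd (Hemi g)`). -/
def cGH {n : ℕ} (g h : Pt n) : Pt n :=
  (‖h - ⟪g, h⟫ • g‖)⁻¹ • (h - ⟪g, h⟫ • g)

/-- Thickness of the lune `Hemi g ∩ Hemi h`: distance of the centers of the two
bounding `(d-1)`-dimensional hemispheres. -/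
def luneThickness {n : ℕ} (g h : Pt n) : ℝ := sdist (cGH g h) (cGH h g)

/-- Width of `C` determined by the supporting hemisphere `Hemi k`. -/
def widthAt {n : ℕ} (k : Pt n) (C : Set (Pt n)) : ℝ :=
  sInf {t | ∃ k', Supports k' C ∧ t = luneThickness k k'}

/-- Thickness (minimal width) of a spherical convex body. -/
def thickness {n : ℕ} (C : Set (Pt n)) : ℝ :=
  sInf {t | ∃ k, Supports k C ∧ t = widthAt k C}

/-- A reduced spherical convex body. -/
def Reduced {n : ℕ} (R : Set (Pt n)) : Prop :=
  SphConvexBody R ∧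
    ∀ C : Set (Pt n), SphConvexBody C → C ⊆ R → C ≠ R → thickness C < thickness R

/-- A spherical convex body of constant width `w`. -/
def ConstWidth {n : ℕ} (W : Set (Pt n)) (w : ℝ) : Prop :=
  SphConvexBody W ∧ ∀ k, Supports k W → widthAt k W = w

/-- Smoothness: a unique supporting hemisphere at every boundary point. -/
def SphSmooth {n : ℕ} (C : Set (Pt n)) : Prop :=
  ∀ p ∈ sphBoundary C, ∃! m, SupportsAt m C p

/-- Strict convexity: the boundary contains no nondegenerate arc. -/
def StrictlyConvexBody {n : ℕ} (C : Set (Pt n)) : Prop :=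
  ∀ x ∈ sphBoundary C, ∀ y ∈ sphBoundary C, x ≠ y →
    ∃ z ∈ uSphere n, OnArc x z y ∧ z ∉ sphBoundary C

/-- Spherical diameter of a set. -/
def sdiam {n : ℕ} (C : Set (Pt n)) : ℝ := sSup {t | ∃ x ∈ C, ∃ y ∈ C, t = sdist x y}

/-- Spherical convex hull: smallest spherically convex set containing `A`. -/
def sphConvHull {n : ℕ} (A : Set (Pt n)) : Set (Pt n) := ⋂₀ {C | SphConvex C ∧ A ⊆ C}

/-- `e` is an extreme point of the convex body `C`. -/
def ExtremePt {n : ℕ} (C : Set (Pt n)) (e : Pt n) : Prop := e ∈ C ∧ SphConvex (C \ {e})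

/-- `Q` is a quarter of a disk of radius `r`: intersection of a ball `sBall c r` with
two hemispheres whose bounding great circles pass through `c` and are orthogonal at `c`. -/
def IsQuarterDisk {n : ℕ} (Q : Set (Pt n)) (r : ℝ) : Prop :=
  ∃ c g h : Pt n, ‖c‖ = 1 ∧ ‖g‖ = 1 ∧ ‖h‖ = 1 ∧ ⟪g, c⟫ = 0 ∧ ⟪h, c⟫ = 0 ∧
    ⟪g, h⟫ = 0 ∧ Q = sBall c r ∩ Hemi g ∩ Hemi h

/-- A spherical polygon: a convex body whose boundary is a finite union of arcs. -/
def IsPolygon {n : ℕ} (V : Set (Pt n)) : Prop :=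
  SphConvexBody V ∧ ∃ F : Finset (Pt n × Pt n),
    sphBoundary V = ⋃ p ∈ F, {z | z ∈ uSphere n ∧ OnArc p.1 z p.2}

/-- A body of constant diameter `w`. -/
def ConstDiameter {n : ℕ} (W : Set (Pt n)) (w : ℝ) : Prop :=
  SphConvexBody W ∧ sdiam W = w ∧ ∀ p ∈ sphBoundary W, ∃ p' ∈ W, sdist p p' = w

namespace SCW

variable {n : ℕ}

lemma unit_inner_self {x : Pt n} (hx : ‖x‖ = 1) : ⟪x, x⟫ = 1 := by
  rw [real_inner_self_eq_norm_mul_norm, hx]; ring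

lemma inner_le_one {x y : Pt n} (hx : ‖x‖ = 1) (hy : ‖y‖ = 1) : ⟪x, y⟫ ≤ 1 := by
  have h := abs_real_inner_le_norm x y
  rw [hx, hy, mul_one] at h
  exact (le_abs_self _).trans h

lemma neg_one_le_inner {x y : Pt n} (hx : ‖x‖ = 1) (hy : ‖y‖ = 1) : -1 ≤ ⟪x, y⟫ := by
  have h := abs_real_inner_le_norm x y
  rw [hx, hy, mul_one] at h
  exact neg_le_of_abs_le h

lemma eq_of_inner_eq_one {x y : Pt n} (hx : ‖x‖ = 1) (hy : ‖y‖ = 1)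
    (h : ⟪x, y⟫ = 1) : x = y := by
  have h2 : ‖x - y‖ ^ 2 = 0 := by rw [norm_sub_sq_real, hx, hy, h]; ring
  exact sub_eq_zero.mp (norm_eq_zero.mp (sq_eq_zero_iff.mp h2))

lemma eq_neg_of_inner_eq_neg_one {x y : Pt n} (hx : ‖x‖ = 1) (hy : ‖y‖ = 1)
    (h : ⟪x, y⟫ = -1) : y = -x := by
  have h2 : ‖x + y‖ ^ 2 = 0 := by rw [norm_add_sq_real, hx, hy, h]; ring
  have h3 := norm_eq_zero.mp (sq_eq_zero_iff.mp h2)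
  have : y = -x := by
    have := add_eq_zero_iff_eq_neg.mp h3
    rw [this]; abel
  exact this

lemma cos_sdist {x y : Pt n} (hx : ‖x‖ = 1) (hy : ‖y‖ = 1) :
    Real.cos (sdist x y) = ⟪x, y⟫ :=
  Real.cos_arccos (neg_one_le_inner hx hy) (inner_le_one hx hy)

lemma sdist_nonneg (x y : Pt n) : 0 ≤ sdist x y := Real.arccos_nonneg _

lemma sdist_le_pi (x y : Pt n) : sdist x y ≤ π := Real.arccos_le_pi _

lemma sdist_comm (x y : Pt n) : sdist x y = sdist y x := by
  unfold sdist; rw [real_inner_comm]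

lemma sdist_self {x : Pt n} (hx : ‖x‖ = 1) : sdist x x = 0 := by
  unfold sdist; rw [unit_inner_self hx]; exact Real.arccos_one

lemma arccos_antitone {a b : ℝ} (h : a ≤ b) : Real.arccos b ≤ Real.arccos a := by
  unfold Real.arccos
  have := Real.monotone_arcsin h
  linarith

/-- From an upper bound on inner product, a lower bound on `sdist`. -/
lemma le_sdist_of_inner_le {x y : Pt n} {r : ℝ} (hr : r ≤ π)
    (h : ⟪x, y⟫ ≤ Real.cos r) : r ≤ sdist x y := by
  rcases le_or_gt 0 r with hr0 | hr0
  · have := arccos_antitone h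
    rwa [Real.arccos_cos hr0 hr] at this
  · exact hr0.le.trans (sdist_nonneg _ _)

lemma sdist_le_of_inner_ge {x y : Pt n} {r : ℝ} (hr0 : 0 ≤ r)
    (h : Real.cos r ≤ ⟪x, y⟫) : sdist x y ≤ r := by
  rcases le_or_gt r π with hrπ | hrπ
  · have := arccos_antitone h
    rwa [Real.arccos_cos hr0 hrπ] at this
  · exact (sdist_le_pi _ _).trans hrπ.le

lemma inner_ge_of_sdist_le {x y : Pt n} (hx : ‖x‖ = 1) (hy : ‖y‖ = 1) {r : ℝ}
    (h : sdist x y ≤ r) (hrπ : r ≤ π) : Real.cos r ≤ ⟪x, y⟫ := by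
  rw [← cos_sdist hx hy]
  exact Real.cos_le_cos_of_nonneg_of_le_pi (sdist_nonneg x y) hrπ h

lemma inner_le_of_le_sdist {x y : Pt n} (hx : ‖x‖ = 1) (hy : ‖y‖ = 1) {r : ℝ}
    (h : r ≤ sdist x y) (hr0 : 0 ≤ r) : ⟪x, y⟫ ≤ Real.cos r := by
  rw [← cos_sdist hx hy]
  exact Real.cos_le_cos_of_nonneg_of_le_pi hr0 (sdist_le_pi x y) h

lemma sdist_eq_zero_iff {x y : Pt n} (hx : ‖x‖ = 1) (hy : ‖y‖ = 1) :
    sdist x y = 0 ↔ x = y := by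
  constructor
  · intro h
    have : Real.cos (sdist x y) = 1 := by rw [h, Real.cos_zero]
    rw [cos_sdist hx hy] at this
    exact eq_of_inner_eq_one hx hy this
  · intro h; rw [h]; exact sdist_self hy

lemma inner_lt_one_of_ne {x y : Pt n} (hx : ‖x‖ = 1) (hy : ‖y‖ = 1) (h : x ≠ y) :
    ⟪x, y⟫ < 1 :=
  lt_of_le_of_ne (inner_le_one hx hy) (fun he => h (eq_of_inner_eq_one hx hy he))

lemma neg_one_lt_inner_of_ne {x y : Pt n} (hx : ‖x‖ = 1) (hy : ‖y‖ = 1) (h : y ≠ -x) :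
    -1 < ⟪x, y⟫ :=
  lt_of_le_of_ne' (neg_one_le_inner hx hy) (fun he => h (eq_neg_of_inner_eq_neg_one hx hy he))

end SCW
namespace SCW

variable {n : ℕ}

/-- Orthonormal companion: for non-proportional unit vectors `x, y`,
a unit `v ⟂ x` with `y = c • x + s • v`. -/
lemma exists_companion {x y : Pt n} (hx : ‖x‖ = 1) (hy : ‖y‖ = 1)
    (h1 : ⟪x, y⟫ < 1) (h2 : -1 < ⟪x, y⟫) :
    ∃ v : Pt n, ‖v‖ = 1 ∧ ⟪x, v⟫ = 0 ∧
      ⟪y, v⟫ = Real.sqrt (1 - ⟪x, y⟫ ^ 2) ∧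
      y = ⟪x, y⟫ • x + Real.sqrt (1 - ⟪x, y⟫ ^ 2) • v := by
  set c := ⟪x, y⟫ with hc
  have hc2 : c ^ 2 < 1 := by
    rw [sq_lt_one_iff_abs_lt_one, abs_lt]; exact ⟨h2, h1⟩
  set s := Real.sqrt (1 - c ^ 2) with hs
  have hspos : 0 < s := Real.sqrt_pos.mpr (by linarith)
  have hssq : s ^ 2 = 1 - c ^ 2 := Real.sq_sqrt (by linarith)
  have hnorm : ‖y - c • x‖ = s := by
    have h' : ‖y - c • x‖ ^ 2 = 1 - c ^ 2 := by
      rw [norm_sub_sq_real, hy, norm_smul, hx, real_inner_smul_right,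
        real_inner_comm x y, ← hc, Real.norm_eq_abs]
      rw [mul_one, sq_abs]
      ring
    rw [← Real.sqrt_sq (norm_nonneg _), h', hs]
  refine ⟨s⁻¹ • (y - c • x), ?_, ?_, ?_, ?_⟩
  · rw [norm_smul, hnorm, Real.norm_eq_abs, abs_inv, abs_of_pos hspos,
      inv_mul_cancel₀ hspos.ne']
  · rw [real_inner_smul_right, inner_sub_right, real_inner_smul_right,
      unit_inner_self hx, ← hc]
    ring
  · rw [real_inner_smul_right, inner_sub_right, real_inner_smul_right,
      unit_inner_self hy, real_inner_comm x y, ← hc]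
    have hone : (1 : ℝ) - c * c = s ^ 2 := by rw [hssq]; ring
    rw [mul_one_sub, mul_comm c, ← mul_one_sub, hone, sq, ← mul_assoc,
      inv_mul_cancel₀ hspos.ne', one_mul]
  · rw [smul_smul, mul_inv_cancel₀ hspos.ne', one_smul]
    abel

/-- The point at arc-length `t` from `x` towards `y` along the great circle. -/
lemma gamma_spec {x y v : Pt n} (hx : ‖x‖ = 1) (hy : ‖y‖ = 1)
    (h2 : -1 < ⟪x, y⟫)
    (hv : ‖v‖ = 1) (hxv : ⟪x, v⟫ = 0)
    (hyv : ⟪y, v⟫ = Real.sqrt (1 - ⟪x, y⟫ ^ 2))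
    {t : ℝ} (ht0 : 0 ≤ t) (ht : t ≤ sdist x y) :
    ‖Real.cos t • x + Real.sin t • v‖ = 1 ∧
      OnArc x (Real.cos t • x + Real.sin t • v) y ∧
      ⟪x, Real.cos t • x + Real.sin t • v⟫ = Real.cos t ∧
      ⟪v, Real.cos t • x + Real.sin t • v⟫ = Real.sin t := by
  set c := ⟪x, y⟫ with hc
  set β := sdist x y with hβ
  have hβπ : β ≤ π := sdist_le_pi x y
  have hβ0 : 0 ≤ β := sdist_nonneg x y
  have hcosβ : Real.cos β = c := cos_sdist hx hy
  have hsinβ : Real.sin β = Real.sqrt (1 - c ^ 2) := by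
    rw [hβ]; unfold sdist; rw [Real.sin_arccos, ← hc]
  set z := Real.cos t • x + Real.sin t • v with hz
  have hxz : ⟪x, z⟫ = Real.cos t := by
    rw [hz, inner_add_right, real_inner_smul_right, real_inner_smul_right,
      unit_inner_self hx, hxv]
    ring
  have hvz : ⟪v, z⟫ = Real.sin t := by
    rw [hz, inner_add_right, real_inner_smul_right, real_inner_smul_right,
      real_inner_comm x v, hxv, unit_inner_self hv]
    ring
  have hyz : ⟪y, z⟫ = Real.cos (β - t) := by
    rw [hz, inner_add_right, real_inner_smul_right, real_inner_smul_right,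
      real_inner_comm x y, ← hc, hyv, Real.cos_sub, hcosβ, hsinβ]
    ring
  have hznorm : ‖z‖ = 1 := by
    have h' : ‖z‖ ^ 2 = 1 := by
      rw [hz, norm_add_sq_real, norm_smul, norm_smul, hx, hv,
        real_inner_smul_left, real_inner_smul_right, hxv, Real.norm_eq_abs,
        Real.norm_eq_abs, mul_one, mul_one, sq_abs, sq_abs]
      linear_combination Real.sin_sq_add_cos_sq t
    rw [← Real.sqrt_sq (norm_nonneg z), h', Real.sqrt_one]
  refine ⟨hznorm, ?_, hxz, hvz⟩
  unfold OnArc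
  have hd1 : sdist x z = t := by
    unfold sdist; rw [hxz]; exact Real.arccos_cos ht0 (ht.trans hβπ)
  have hd2 : sdist z y = β - t := by
    unfold sdist
    rw [real_inner_comm, hyz]
    exact Real.arccos_cos (by linarith) (by linarith)
  rw [hd1, hd2, ← hβ]; ring

end SCW
namespace SCW

variable {n : ℕ}

lemma one_sub_cos_le {t : ℝ} (ht0 : 0 < t) (ht : t ≤ π / 2) :
    1 - Real.cos t ≤ t * Real.sin t := by
  have ht2 : (2 : ℝ) * (t / 2) = t := by ring
  have hcos2 := Real.cos_two_mul (t / 2)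
  rw [ht2] at hcos2
  have hsin2 := Real.sin_two_mul (t / 2)
  rw [ht2] at hsin2
  have hpyth := Real.sin_sq_add_cos_sq (t / 2)
  have hsle : Real.sin (t / 2) ≤ t / 2 := Real.sin_le (by linarith)
  have hsnn : 0 ≤ Real.sin (t / 2) :=
    Real.sin_nonneg_of_nonneg_of_le_pi (by linarith) (by nlinarith [Real.pi_pos])
  have hchalf : (1 : ℝ) / 2 ≤ Real.cos (t / 2) := by
    have h3 : t / 2 ≤ π / 3 := by nlinarith [Real.pi_pos]
    have := Real.cos_le_cos_of_nonneg_of_le_pi (x := t / 2) (y := π / 3)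
      (by linarith) (by nlinarith [Real.pi_pos]) h3
    rwa [Real.cos_pi_div_three] at this
  nlinarith [mul_le_mul_of_nonneg_left hsle hsnn,
    mul_le_mul_of_nonneg_right hchalf (mul_nonneg hsnn ht0.le)]

/-- Key tangent-cone lemma: if `⟪q, ·⟫` is maximized at `y` along the arc from
`y` to `p`, then `⟪q, p⟫ ≤ ⟪q, y⟫ * ⟪y, p⟫`. -/
lemma inner_tangent {q y p : Pt n} (hq : ‖q‖ = 1) (hy : ‖y‖ = 1) (hp : ‖p‖ = 1)
    (hne : p ≠ y) (hne' : p ≠ -y)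
    (h : ∀ z : Pt n, ‖z‖ = 1 → OnArc y z p → ⟪q, z⟫ ≤ ⟪q, y⟫) :
    ⟪q, p⟫ ≤ ⟪q, y⟫ * ⟪y, p⟫ := by
  have hc1 : ⟪y, p⟫ < 1 := inner_lt_one_of_ne hy hp (fun he => hne he.symm)
  have hc2 : -1 < ⟪y, p⟫ := neg_one_lt_inner_of_ne hy hp hne'
  obtain ⟨v, hv, hyv, hpv, hdecomp⟩ := exists_companion hy hp hc1 hc2
  have hβ0 : 0 < sdist y p := by
    rcases lt_or_eq_of_le (sdist_nonneg y p) with h' | h'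
    · exact h'
    · exact absurd ((sdist_eq_zero_iff hy hp).mp h'.symm) (fun he => hne he.symm)
  have ha1 : ⟪q, y⟫ ≤ 1 := inner_le_one hq hy
  have ha2 : -1 ≤ ⟪q, y⟫ := neg_one_le_inner hq hy
  have key : ⟪q, v⟫ ≤ 0 := by
    by_contra hC
    push_neg at hC
    set C := ⟪q, v⟫ with hCdef
    set t := min (sdist y p) (min (π / 2) (C / 2)) with htdef
    have ht0 : 0 < t := by
      apply lt_min hβ0
      apply lt_min (by positivity) (by positivity)
    have htβ : t ≤ sdist y p := min_le_left _ _
    have htπ : t ≤ π / 2 := le_trans (min_le_right _ _) (min_le_left _ _)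
    have htC : t ≤ C / 2 := le_trans (min_le_right _ _) (min_le_right _ _)
    obtain ⟨hznorm, harc, hyz, hvz⟩ :=
      gamma_spec hy hp hc2 hv hyv hpv ht0.le htβ
    have hqz : ⟪q, Real.cos t • y + Real.sin t • v⟫
        = Real.cos t * ⟪q, y⟫ + Real.sin t * C := by
      rw [inner_add_right, real_inner_smul_right, real_inner_smul_right]
    have hmax := h _ hznorm harc
    rw [hqz] at hmax
    have hsint : 0 < Real.sin t :=
      Real.sin_pos_of_pos_of_lt_pi ht0 (by nlinarith [Real.pi_pos])
    have hcos1 : Real.cos t ≤ 1 := Real.cos_le_one t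
    have hbound := one_sub_cos_le ht0 htπ
    -- sin t * C ≤ ⟪q,y⟫ (1 - cos t) ≤ (1 - cos t) ≤ t sin t, so C ≤ t ≤ C/2
    nlinarith [mul_pos hsint hC]
  have hqp : ⟪q, p⟫ = ⟪y, p⟫ * ⟪q, y⟫ + Real.sqrt (1 - ⟪y, p⟫ ^ 2) * ⟪q, v⟫ := by
    conv_lhs => rw [hdecomp]
    rw [inner_add_right, real_inner_smul_right, real_inner_smul_right]
  have hs : 0 ≤ Real.sqrt (1 - ⟪y, p⟫ ^ 2) := Real.sqrt_nonneg _
  have := mul_nonpos_of_nonneg_of_nonpos hs key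
  rw [hqp]
  nlinarith [this]

end SCW
namespace SCW

variable {n : ℕ} {W : Set (Pt n)}

lemma mem_unit (hB : SphConvexBody W) {p : Pt n} (hp : p ∈ W) : ‖p‖ = 1 :=
  hB.2.1.1 hp

lemma no_antipode (hB : SphConvexBody W) {p q : Pt n} (hp : p ∈ W) (hq : q ∈ W) :
    q ≠ -p := by
  intro he
  exact hB.2.1.2.1 p hp (he ▸ hq)

lemma arc_mem (hB : SphConvexBody W) {x y z : Pt n} (hx : x ∈ W) (hy : y ∈ W)
    (hz : ‖z‖ = 1) (h : OnArc x z y) : z ∈ W :=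
  hB.2.1.2.2 x hx y hy z hz h

lemma isCompact_W (hB : SphConvexBody W) : IsCompact W := by
  have hsub : W ⊆ Metric.closedBall (0 : Pt n) 1 := by
    intro p hp
    simp [Metric.mem_closedBall, dist_eq_norm, mem_unit hB hp]
  exact (isCompact_closedBall (0 : Pt n) 1).of_isClosed_subset hB.1 hsub

lemma W_nonempty (hB : SphConvexBody W) : W.Nonempty := by
  obtain ⟨x, hx, -⟩ := hB.2.2
  exact ⟨x, hx⟩

lemma exists_max_inner (hB : SphConvexBody W) (q : Pt n) :
    ∃ p₀ ∈ W, ∀ p ∈ W, ⟪q, p⟫ ≤ ⟪q, p₀⟫ := by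
  have hf : ContinuousOn (fun p : Pt n => (⟪q, p⟫ : ℝ)) W :=
    (continuous_const.inner continuous_id).continuousOn
  obtain ⟨p₀, hp₀, hmax⟩ := (isCompact_W hB).exists_isMaxOn (W_nonempty hB) hf
  exact ⟨p₀, hp₀, fun p hp => hmax hp⟩

lemma supports_mk (hB : SphConvexBody W) {m p₀ : Pt n} (hm : ‖m‖ = 1)
    (hnn : ∀ p ∈ W, 0 ≤ ⟪m, p⟫) (hp₀ : p₀ ∈ W) (h0 : ⟪m, p₀⟫ = 0) :
    Supports m W := by
  refine ⟨hm, ?_, p₀, hp₀, ?_⟩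
  · intro p hp
    refine ⟨hB.2.1.1 hp, ?_⟩
    apply sdist_le_of_inner_ge (by positivity)
    rw [Real.cos_pi_div_two]
    exact hnn p hp
  · unfold sdist
    rw [h0]
    exact Real.arccos_zero

/-- Separating supporting hemisphere away from an exterior point `q`, via the
nearest-point (maximal inner product) construction. -/
lemma exists_sep_support (hB : SphConvexBody W)
    (htwo : ∃ a ∈ W, ∃ b ∈ W, a ≠ b) {q : Pt n} (hq : ‖q‖ = 1) (hqW : q ∉ W) :
    ∃ m p₀ : Pt n, ‖m‖ = 1 ∧ (∀ p ∈ W, 0 ≤ ⟪m, p⟫) ∧ p₀ ∈ W ∧ ⟪m, p₀⟫ = 0 ∧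
      ⟪m, q⟫ < 0 ∧ ∀ p ∈ W, ⟪q, p⟫ ≤ ⟪q, p₀⟫ := by
  obtain ⟨p₀, hp₀, hmax⟩ := exists_max_inner hB q
  have hp₀u : ‖p₀‖ = 1 := mem_unit hB hp₀
  set c := ⟪q, p₀⟫ with hc
  have hc1 : c < 1 := by
    rcases lt_or_eq_of_le (inner_le_one hq hp₀u) with h' | h'
    · exact h'
    · exact absurd (eq_of_inner_eq_one hq hp₀u h' ▸ hp₀) hqW
  have hc2 : -1 < c := by
    rcases lt_or_eq_of_le (neg_one_le_inner hq hp₀u) with h' | h'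
    · exact h'
    · exfalso
      obtain ⟨a, ha, b, hb, hab⟩ := htwo
      have key : ∀ p ∈ W, p = -q := by
        intro p hp
        have h1 : ⟪q, p⟫ ≤ -1 := by
          have h2 := hmax p hp
          have h3 : c = -1 := by rw [hc, ← h']
          linarith
        have h2 : ⟪q, p⟫ = -1 := le_antisymm h1 (neg_one_le_inner hq (mem_unit hB hp))
        exact eq_neg_of_inner_eq_neg_one hq (mem_unit hB hp) h2
      exact hab ((key a ha).trans (key b hb).symm)
  have hcsq : c ^ 2 < 1 := by
    rw [sq_lt_one_iff_abs_lt_one, abs_lt]; exact ⟨hc2, hc1⟩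
  set s := Real.sqrt (1 - c ^ 2) with hs
  have hspos : 0 < s := Real.sqrt_pos.mpr (by linarith)
  have hssq : s ^ 2 = 1 - c ^ 2 := Real.sq_sqrt (by linarith)
  have hnorm : ‖c • p₀ - q‖ = s := by
    have h' : ‖c • p₀ - q‖ ^ 2 = 1 - c ^ 2 := by
      rw [norm_sub_sq_real, norm_smul, hp₀u, hq, real_inner_smul_left,
        real_inner_comm q p₀, ← hc, Real.norm_eq_abs, mul_one, sq_abs]
      ring
    rw [← Real.sqrt_sq (norm_nonneg _), h', hs]
  refine ⟨s⁻¹ • (c • p₀ - q), p₀, ?_, ?_, hp₀, ?_, ?_, hmax⟩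
  · rw [norm_smul, hnorm, Real.norm_eq_abs, abs_inv, abs_of_pos hspos,
      inv_mul_cancel₀ hspos.ne']
  · intro p hp
    have hkey : ⟪q, p⟫ ≤ c * ⟪p₀, p⟫ := by
      rcases eq_or_ne p p₀ with rfl | hne
      · rw [unit_inner_self hp₀u, mul_one]
      · refine inner_tangent hq hp₀u (mem_unit hB hp) hne
          (no_antipode hB hp₀ hp) ?_
        intro z hz harc
        exact hmax z (arc_mem hB hp₀ hp hz harc)
    rw [real_inner_smul_left, inner_sub_left, real_inner_smul_left]
    have h0 : 0 ≤ c * ⟪p₀, p⟫ - ⟪q, p⟫ := by linarith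
    exact mul_nonneg (inv_nonneg.mpr hspos.le) h0
  · rw [real_inner_smul_left, inner_sub_left, real_inner_smul_left,
      unit_inner_self hp₀u, ← hc]
    ring
  · rw [real_inner_smul_left, inner_sub_left, real_inner_smul_left,
      real_inner_comm q p₀, ← hc, unit_inner_self hq]
    have hlt : c * c - 1 < 0 := by nlinarith
    exact mul_neg_of_pos_of_neg (by positivity) hlt

lemma interior_pos (hB : SphConvexBody W) {x : Pt n} (hx : x ∈ sphInterior W)
    {m : Pt n} (hm : ‖m‖ = 1) (hnn : ∀ p ∈ W, 0 ≤ ⟪m, p⟫) : 0 < ⟪m, x⟫ := by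
  obtain ⟨hxW, ε, hε, hcap⟩ := hx
  have hxu : ‖x‖ = 1 := mem_unit hB hxW
  rcases lt_or_eq_of_le (hnn x hxW) with h' | h'
  · exact h'
  · exfalso
    set ε' := min (ε / 2) (π / 2) with hε'
    have hε'0 : 0 < ε' := lt_min (by linarith) (by positivity)
    have hε'ε : ε' < ε := lt_of_le_of_lt (min_le_left _ _) (by linarith)
    have hε'π : ε' ≤ π / 2 := min_le_right _ _
    set y := Real.cos ε' • x - Real.sin ε' • m with hy
    have hmx : ⟪x, m⟫ = 0 := by rw [real_inner_comm, ← h']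
    have hynorm : ‖y‖ = 1 := by
      have h2 : ‖y‖ ^ 2 = 1 := by
        rw [hy, norm_sub_sq_real, norm_smul, norm_smul, hxu, hm,
          real_inner_smul_left, real_inner_smul_right, hmx, Real.norm_eq_abs,
          Real.norm_eq_abs, mul_one, mul_one, sq_abs, sq_abs]
        linear_combination Real.sin_sq_add_cos_sq ε'
      rw [← Real.sqrt_sq (norm_nonneg y), h2, Real.sqrt_one]
    have hxy : ⟪x, y⟫ = Real.cos ε' := by
      rw [hy, inner_sub_right, real_inner_smul_right, real_inner_smul_right,
        unit_inner_self hxu, hmx]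
      ring
    have hyW : y ∈ W := by
      apply hcap y hynorm
      unfold sdist
      rw [hxy, Real.arccos_cos hε'0.le (by linarith [Real.pi_pos])]
      exact hε'ε
    have hmy : ⟪m, y⟫ = -Real.sin ε' := by
      rw [hy, inner_sub_right, real_inner_smul_right, real_inner_smul_right,
        ← h', unit_inner_self hm]
      ring
    have hsin : 0 < Real.sin ε' :=
      Real.sin_pos_of_pos_of_lt_pi hε'0 (by linarith [Real.pi_pos])
    have := hnn y hyW
    rw [hmy] at this
    linarith

end SCW
namespace SCW

variable {n : ℕ} {W : Set (Pt n)}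

lemma sdist_triangle {x y z : Pt n} (hx : ‖x‖ = 1) (hy : ‖y‖ = 1) (hz : ‖z‖ = 1) :
    sdist x z ≤ sdist x y + sdist y z := by
  rcases eq_or_ne x y with rfl | hxy
  · rw [sdist_self hx]; linarith
  rcases eq_or_ne z y with rfl | hzy
  · rw [sdist_self hz, sdist_comm x z]
    have : sdist z x = sdist x z := sdist_comm z x
    linarith [sdist_comm x z]
  rcases eq_or_ne x (-y) with rfl | hxny
  · have : sdist (-y) y = π := by
      unfold sdist
      rw [inner_neg_left, unit_inner_self hy]
      exact Real.arccos_neg_one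
    rw [this]
    linarith [sdist_le_pi (-y) z, sdist_nonneg y z]
  rcases eq_or_ne z (-y) with rfl | hzny
  · have : sdist y (-y) = π := by
      unfold sdist
      rw [inner_neg_right, unit_inner_self hy]
      exact Real.arccos_neg_one
    rw [this]
    linarith [sdist_le_pi x (-y), sdist_nonneg x y]
  -- nondegenerate case
  have hc1x : ⟪y, x⟫ < 1 := inner_lt_one_of_ne hy hx (fun he => hxy he.symm)
  have hc2x : -1 < ⟪y, x⟫ := neg_one_lt_inner_of_ne hy hx hxny
  have hc1z : ⟪y, z⟫ < 1 := inner_lt_one_of_ne hy hz (fun he => hzy he.symm)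
  have hc2z : -1 < ⟪y, z⟫ := neg_one_lt_inner_of_ne hy hz hzny
  obtain ⟨u, hu, hyu, hxu, hdecx⟩ := exists_companion hy hx hc1x hc2x
  obtain ⟨v, hv, hyv, hzv, hdecz⟩ := exists_companion hy hz hc1z hc2z
  set A := sdist x y with hA
  set B := sdist y z with hB
  have hA' : sdist y x = A := sdist_comm y x
  have hcosA : Real.cos A = ⟪y, x⟫ := by rw [← hA', cos_sdist hy hx]
  have hcosB : Real.cos B = ⟪y, z⟫ := cos_sdist hy hz
  have hsinA : Real.sin A = Real.sqrt (1 - ⟪y, x⟫ ^ 2) := by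
    rw [← hA']; unfold sdist; rw [Real.sin_arccos]
  have hsinB : Real.sin B = Real.sqrt (1 - ⟪y, z⟫ ^ 2) := by
    rw [hB]; unfold sdist; rw [Real.sin_arccos]
  have hinner : ⟪x, z⟫ = ⟪y, x⟫ * ⟪y, z⟫
      + Real.sqrt (1 - ⟪y, x⟫ ^ 2) * Real.sqrt (1 - ⟪y, z⟫ ^ 2) * ⟪u, v⟫ := by
    conv_lhs => rw [hdecx, hdecz]
    simp only [inner_add_left, inner_add_right, real_inner_smul_left,
      real_inner_smul_right]
    rw [unit_inner_self hy, hyv, real_inner_comm y u, hyu]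
    ring
  have hsA : 0 ≤ Real.sqrt (1 - ⟪y, x⟫ ^ 2) := Real.sqrt_nonneg _
  have hsB : 0 ≤ Real.sqrt (1 - ⟪y, z⟫ ^ 2) := Real.sqrt_nonneg _
  have huv : -1 ≤ ⟪u, v⟫ := neg_one_le_inner hu hv
  have hbound : Real.cos (A + B) ≤ ⟪x, z⟫ := by
    rw [Real.cos_add, hcosA, hcosB, hinner, hsinA, hsinB]
    have h1 := mul_le_mul_of_nonneg_left huv (mul_nonneg hsA hsB)
    nlinarith [h1]
  rcases le_or_gt π (A + B) with hcase | hcase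
  · linarith [sdist_le_pi x z]
  · have := arccos_antitone hbound
    have harc : Real.arccos (Real.cos (A + B)) = A + B :=
      Real.arccos_cos (add_nonneg (sdist_nonneg x y) (sdist_nonneg y z)) hcase.le
    unfold sdist
    rw [← harc]
    exact arccos_antitone hbound

lemma luneThickness_self {g : Pt n} (hg : ‖g‖ = 1) : luneThickness g g = π / 2 := by
  unfold luneThickness cGH
  have h0 : g - ⟪g, g⟫ • g = 0 := by rw [unit_inner_self hg, one_smul, sub_self]
  rw [h0]
  simp [sdist, Real.arccos_zero]

lemma luneThickness_neg {g : Pt n} (hg : ‖g‖ = 1) :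
    luneThickness g (-g) = π / 2 := by
  unfold luneThickness cGH
  have h1 : -g - ⟪g, -g⟫ • g = 0 := by
    rw [inner_neg_right, unit_inner_self hg, neg_smul, one_smul, sub_neg_eq_add,
      neg_add_cancel]
  have h2 : g - ⟪-g, g⟫ • -g = 0 := by
    rw [inner_neg_left, unit_inner_self hg, neg_smul, one_smul, neg_neg, sub_self]
  rw [h1, h2]
  simp [sdist, Real.arccos_zero]

lemma norm_sub_proj {x y : Pt n} (hx : ‖x‖ = 1) (hy : ‖y‖ = 1) :
    ‖y - ⟪x, y⟫ • x‖ = Real.sqrt (1 - ⟪x, y⟫ ^ 2) := by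
  have h' : ‖y - ⟪x, y⟫ • x‖ ^ 2 = 1 - ⟪x, y⟫ ^ 2 := by
    rw [norm_sub_sq_real, hy, norm_smul, hx, real_inner_smul_right,
      real_inner_comm x y, Real.norm_eq_abs, mul_one, sq_abs]
    ring
  rw [← Real.sqrt_sq (norm_nonneg _), h']

lemma luneThickness_formula {g h : Pt n} (hg : ‖g‖ = 1) (hh : ‖h‖ = 1)
    (h1 : ⟪g, h⟫ < 1) (h2 : -1 < ⟪g, h⟫) :
    luneThickness g h = Real.arccos (-⟪g, h⟫) := by
  have hcsq : ⟪g, h⟫ ^ 2 < 1 := by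
    rw [sq_lt_one_iff_abs_lt_one, abs_lt]; exact ⟨h2, h1⟩
  have hssq : Real.sqrt (1 - ⟪g, h⟫ ^ 2) ^ 2 = 1 - ⟪g, h⟫ ^ 2 :=
    Real.sq_sqrt (by linarith)
  have hspos : 0 < Real.sqrt (1 - ⟪g, h⟫ ^ 2) := Real.sqrt_pos.mpr (by linarith)
  have hn1 : ‖h - ⟪g, h⟫ • g‖ = Real.sqrt (1 - ⟪g, h⟫ ^ 2) := norm_sub_proj hg hh
  have hn2 : ‖g - ⟪g, h⟫ • h‖ = Real.sqrt (1 - ⟪g, h⟫ ^ 2) := by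
    have h' := norm_sub_proj hh hg
    rwa [real_inner_comm g h] at h'
  have hip : ⟪h - ⟪g, h⟫ • g, g - ⟪g, h⟫ • h⟫ = -⟪g, h⟫ * (1 - ⟪g, h⟫ ^ 2) := by
    simp only [inner_sub_left, inner_sub_right, real_inner_smul_left,
      real_inner_smul_right]
    rw [unit_inner_self hg, unit_inner_self hh, real_inner_comm g h]
    ring
  have hval : ∀ c s : ℝ, 0 < s → s ^ 2 = 1 - c ^ 2 →
      s⁻¹ * (s⁻¹ * (-c * (1 - c ^ 2))) = -c := by
    intro c s hs hsq
    rw [← hsq]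
    have he : s⁻¹ * (s⁻¹ * (-c * s ^ 2)) = -c * (s⁻¹ * s) * (s⁻¹ * s) := by ring
    rw [he, inv_mul_cancel₀ hs.ne']
    ring
  unfold luneThickness cGH sdist
  rw [real_inner_comm g h]
  rw [hn1, hn2, real_inner_smul_left, real_inner_smul_right, hip,
    hval ⟪g, h⟫ _ hspos hssq]

end SCW
namespace SCW

variable {n : ℕ} {W : Set (Pt n)}

lemma luneThickness_nonneg (g h : Pt n) : 0 ≤ luneThickness g h := by
  unfold luneThickness; exact sdist_nonneg _ _

lemma supports_nonneg (hB : SphConvexBody W) {m p : Pt n} (hm : Supports m W)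
    (hp : p ∈ W) : 0 ≤ ⟪m, p⟫ := by
  have h := (hm.2.1 hp).2
  have := inner_ge_of_sdist_le hm.1 (mem_unit hB hp) h (by linarith [Real.pi_pos])
  rwa [Real.cos_pi_div_two] at this

lemma width_nonneg {m : Pt n} (hm : Supports m W) : 0 ≤ widthAt m W := by
  unfold widthAt
  have hne : {t | ∃ k', Supports k' W ∧ t = luneThickness m k'}.Nonempty :=
    ⟨luneThickness m m, m, hm, rfl⟩
  refine le_csInf hne ?_
  rintro t ⟨k'', -, rfl⟩
  exact luneThickness_nonneg _ _

lemma exists_support_lt {m : Pt n} (hm : Supports m W) {b : ℝ}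
    (hb : widthAt m W < b) :
    ∃ k', Supports k' W ∧ luneThickness m k' < b := by
  unfold widthAt at hb
  have hne : {t | ∃ k', Supports k' W ∧ t = luneThickness m k'}.Nonempty :=
    ⟨luneThickness m m, m, hm, rfl⟩
  obtain ⟨t, ⟨k', hk', rfl⟩, hlt⟩ := exists_lt_of_csInf_lt hne hb
  exact ⟨k', hk', hlt⟩

lemma exists_far_support {m : Pt n} {w : ℝ} (hm : Supports m W)
    (hwidth : widthAt m W = w) {b : ℝ} (hb1 : w < b) (hb2 : b < π / 2) :
    ∃ k', Supports k' W ∧ ⟪m, k'⟫ < -Real.cos b := by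
  obtain ⟨k', hk', hlt⟩ := exists_support_lt hm (by rw [hwidth]; exact hb1)
  have hku : ‖k'‖ = 1 := hk'.1
  have hmu : ‖m‖ = 1 := hm.1
  have hne1 : k' ≠ m := by
    intro he; rw [he, luneThickness_self hmu] at hlt; linarith
  have hne2 : k' ≠ -m := by
    intro he; rw [he, luneThickness_neg hmu] at hlt; linarith
  have h1 : ⟪m, k'⟫ < 1 := inner_lt_one_of_ne hmu hku (fun he => hne1 he.symm)
  have h2 : -1 < ⟪m, k'⟫ := neg_one_lt_inner_of_ne hmu hku hne2
  rw [luneThickness_formula hmu hku h1 h2] at hlt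
  have h3 := Real.cos_lt_cos_of_nonneg_of_le_pi (Real.arccos_nonneg _)
    (by linarith [Real.pi_pos]) hlt
  rw [Real.cos_arccos (by linarith) (by linarith)] at h3
  refine ⟨k', hk', by linarith⟩

/-- Any two points of a constant-width (< π/2) body are at distance ≤ w. -/
lemma diam_le {w : ℝ} (hB : SphConvexBody W) (htwo : ∃ a ∈ W, ∃ b ∈ W, a ≠ b)
    (hconst : ∀ k, Supports k W → widthAt k W = w) (hw : w < π / 2) :
    ∀ p ∈ W, ∀ q ∈ W, sdist p q ≤ w := by
  have hcomp := (isCompact_W hB).prod (isCompact_W hB)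
  have hnep : (W ×ˢ W).Nonempty := (W_nonempty hB).prod (W_nonempty hB)
  have hf : ContinuousOn (fun pq : Pt n × Pt n => (⟪pq.1, pq.2⟫ : ℝ)) (W ×ˢ W) :=
    continuous_inner.continuousOn
  obtain ⟨⟨x, y⟩, hxyW, hmin⟩ := hcomp.exists_isMinOn hnep hf
  have hxW : x ∈ W := hxyW.1
  have hyW : y ∈ W := hxyW.2
  have hxu : ‖x‖ = 1 := mem_unit hB hxW
  have hyu : ‖y‖ = 1 := mem_unit hB hyW
  have hmin' : ∀ p ∈ W, ∀ q ∈ W, ⟪x, y⟫ ≤ ⟪p, q⟫ := fun p hp q hq =>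
    hmin (Set.mk_mem_prod hp hq)
  have hdom : ∀ p ∈ W, ∀ q ∈ W, sdist p q ≤ sdist x y := by
    intro p hp q hq
    exact arccos_antitone (hmin' p hp q hq)
  suffices hDw : sdist x y ≤ w by
    intro p hp q hq; exact (hdom p hp q hq).trans hDw
  by_contra hDw
  push_neg at hDw
  obtain ⟨a, ha, b', hb', hab⟩ := htwo
  have hD0 : 0 < sdist x y := by
    rcases lt_or_eq_of_le (sdist_nonneg a b') with h' | h'
    · exact lt_of_lt_of_le h' (hdom a ha b' hb')
    · exact absurd ((sdist_eq_zero_iff (mem_unit hB ha) (mem_unit hB hb')).mp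
        h'.symm) hab
  have hxyne : x ≠ y := by
    intro he; rw [he, sdist_self hyu] at hD0; exact lt_irrefl _ hD0
  have hc1 : ⟪x, y⟫ < 1 := inner_lt_one_of_ne hxu hyu hxyne
  have hc2 : -1 < ⟪x, y⟫ := neg_one_lt_inner_of_ne hxu hyu (no_antipode hB hxW hyW)
  have hcsq : ⟪x, y⟫ ^ 2 < 1 := by
    rw [sq_lt_one_iff_abs_lt_one, abs_lt]; exact ⟨hc2, hc1⟩
  have hssq : Real.sqrt (1 - ⟪x, y⟫ ^ 2) ^ 2 = 1 - ⟪x, y⟫ ^ 2 :=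
    Real.sq_sqrt (by linarith)
  have hspos : 0 < Real.sqrt (1 - ⟪x, y⟫ ^ 2) := Real.sqrt_pos.mpr (by linarith)
  obtain ⟨v, hv, hxv, hyv, hdec⟩ := exists_companion hxu hyu hc1 hc2
  have hcosD : Real.cos (sdist x y) = ⟪x, y⟫ := cos_sdist hxu hyu
  have hsinD : Real.sin (sdist x y) = Real.sqrt (1 - ⟪x, y⟫ ^ 2) := by
    unfold sdist; rw [Real.sin_arccos]
  -- the supporting pole aligned with the diameter pair
  set m : Pt n := Real.sqrt (1 - ⟪x, y⟫ ^ 2) • x - ⟪x, y⟫ • v with hmdef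
  have hvx : ⟪v, x⟫ = 0 := by rw [real_inner_comm x v]; exact hxv
  have hvv : ⟪v, v⟫ = 1 := unit_inner_self hv
  have hxx : ⟪x, x⟫ = 1 := unit_inner_self hxu
  have hmu : ‖m‖ = 1 := by
    have h2 : ‖m‖ ^ 2 = 1 := by
      rw [hmdef, norm_sub_sq_real, norm_smul, norm_smul, hxu, hv,
        real_inner_smul_left, real_inner_smul_right, hxv, Real.norm_eq_abs,
        Real.norm_eq_abs, mul_one, mul_one, sq_abs, sq_abs, hssq]
      ring
    rw [← Real.sqrt_sq (norm_nonneg m), h2, Real.sqrt_one]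
  have hmy : ⟪m, y⟫ = 0 := by
    rw [hmdef, inner_sub_left, real_inner_smul_left, real_inner_smul_left,
      real_inner_comm y v, hyv]
    ring
  have hmx : ⟪m, x⟫ = Real.sqrt (1 - ⟪x, y⟫ ^ 2) := by
    rw [hmdef, inner_sub_left, real_inner_smul_left, real_inner_smul_left,
      hxx, hvx]
    ring
  have hnn : ∀ p ∈ W, 0 ≤ ⟪m, p⟫ := by
    intro p hp
    have hpu : ‖p‖ = 1 := mem_unit hB hp
    have hkey : ⟪x, y⟫ * ⟪y, p⟫ ≤ ⟪x, p⟫ := by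
      rcases eq_or_ne p y with rfl | hne
      · rw [unit_inner_self hyu, mul_one]
      · have := inner_tangent (q := -x) (by rw [norm_neg]; exact hxu) hyu hpu
          hne (no_antipode hB hyW hp) ?_
        · rw [inner_neg_left, inner_neg_left] at this
          nlinarith [this]
        · intro z hz harc
          rw [inner_neg_left, inner_neg_left, neg_le_neg_iff]
          exact hmin' x hxW z (arc_mem hB hyW hp hz harc)
    have hyp : ⟪y, p⟫ = ⟪x, y⟫ * ⟪x, p⟫ + Real.sqrt (1 - ⟪x, y⟫ ^ 2) * ⟪v, p⟫ := by
      conv_lhs => rw [hdec]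
      rw [inner_add_left, real_inner_smul_left, real_inner_smul_left]
    have hmp : ⟪m, p⟫ = Real.sqrt (1 - ⟪x, y⟫ ^ 2) * ⟪x, p⟫ - ⟪x, y⟫ * ⟪v, p⟫ := by
      rw [hmdef, inner_sub_left, real_inner_smul_left, real_inner_smul_left]
    have h3 : Real.sqrt (1 - ⟪x, y⟫ ^ 2) *
        (Real.sqrt (1 - ⟪x, y⟫ ^ 2) * ⟪x, p⟫ - ⟪x, y⟫ * ⟪v, p⟫)
        = ⟪x, p⟫ - ⟪x, y⟫ * ⟪y, p⟫ := by
      rw [hyp]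
      linear_combination (⟪x, p⟫ : ℝ) * hssq
    have h2 : 0 ≤ Real.sqrt (1 - ⟪x, y⟫ ^ 2) * ⟪m, p⟫ := by
      rw [hmp, h3]
      linarith
    exact (mul_nonneg_iff_of_pos_left hspos).mp h2
  have hsupm : Supports m W := supports_mk hB hmu hnn hyW hmy
  have hwidthm : widthAt m W = w := hconst m hsupm
  have hw0 : 0 ≤ w := by rw [← hwidthm]; exact width_nonneg hsupm
  set E := min (sdist x y) (π / 2) with hEdef
  have hwE : w < E := lt_min hDw hw
  set b := (w + E) / 2 with hbdef
  have hbw : w < b := by rw [hbdef]; linarith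
  have hbE : b < E := by rw [hbdef]; linarith
  have hbpi : b < π / 2 := lt_of_lt_of_le hbE (min_le_right _ _)
  have hb0 : 0 ≤ b := by linarith
  obtain ⟨k', hk', hfar⟩ := exists_far_support hsupm hwidthm hbw hbpi
  have hk'u : ‖k'‖ = 1 := hk'.1
  have hlow : π - b ≤ sdist m k' := by
    apply le_sdist_of_inner_le (by linarith)
    rw [Real.cos_pi_sub]
    linarith
  rcases le_or_gt (sdist x y) (π / 2) with hcase | hcase
  · have hED : E = sdist x y := min_eq_left hcase
    have hdx : sdist m x = π / 2 - sdist x y := by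
      unfold sdist
      rw [hmx, ← hsinD, ← Real.cos_pi_div_two_sub]
      exact Real.arccos_cos (by linarith) (by linarith [Real.pi_pos])
    have htri := sdist_triangle hmu hxu hk'u
    have hxk : sdist x k' ≤ π / 2 := by
      have := (hk'.2.1 hxW).2
      rwa [sdist_comm]
    linarith
  · have hEpi : E = π / 2 := min_eq_right hcase.le
    -- m lies on the arc from x to y, hence in W
    have ht0 : (0 : ℝ) ≤ sdist x y - π / 2 := by linarith
    have ht1 : sdist x y - π / 2 ≤ sdist x y := by linarith [Real.pi_pos]
    obtain ⟨hznorm, harc, -, -⟩ := gamma_spec hxu hyu hc2 hv hxv hyv ht0 ht1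
    have hzm : Real.cos (sdist x y - π / 2) • x + Real.sin (sdist x y - π / 2) • v
        = m := by
      rw [Real.cos_sub_pi_div_two, Real.sin_sub_pi_div_two, hsinD, hcosD, hmdef]
      rw [neg_smul]
      abel
    rw [hzm] at hznorm harc
    have hmW : m ∈ W := arc_mem hB hxW hyW hznorm harc
    have hmk : sdist m k' ≤ π / 2 := by
      have := (hk'.2.1 hmW).2
      rwa [sdist_comm]
    linarith

end SCW
namespace SCW

variable {n : ℕ} {W : Set (Pt n)}

lemma boundary_support (hB : SphConvexBody W) (htwo : ∃ a ∈ W, ∃ b ∈ W, a ≠ b)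
    {z₀ : Pt n} (hz : z₀ ∈ sphBoundary W) :
    ∃ m : Pt n, ‖m‖ = 1 ∧ (∀ p ∈ W, 0 ≤ ⟪m, p⟫) ∧ ⟪m, z₀⟫ = 0 := by
  obtain ⟨hz₀W, hznint⟩ := hz
  have hz₀u : ‖z₀‖ = 1 := mem_unit hB hz₀W
  have hq : ∀ k : ℕ, ∃ q : Pt n, ‖q‖ = 1 ∧ sdist z₀ q < 1 / (k + 1) ∧ q ∉ W := by
    intro k
    by_contra hcon
    push_neg at hcon
    exact hznint ⟨hz₀W, 1 / (k + 1), by positivity,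
      fun y hy hlt => hcon y hy hlt⟩
  choose q hqu hqd hqW using hq
  have hsep := fun k => exists_sep_support hB htwo (hqu k) (hqW k)
  choose ms ps hmu hmnn hpW hmp0 hmq hpmax using hsep
  -- upper bound on ⟪ms k, z₀⟫
  have hub : ∀ k : ℕ, ⟪ms k, z₀⟫ ≤ Real.sqrt (2 - 2 * Real.cos (1 / (k + 1))) := by
    intro k
    have h1 : ⟪ms k, z₀⟫ = ⟪ms k, q k⟫ + ⟪ms k, z₀ - q k⟫ := by
      rw [inner_sub_right]; ring
    have h2 : ⟪ms k, z₀ - q k⟫ ≤ ‖z₀ - q k‖ := by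
      have := real_inner_le_norm (ms k) (z₀ - q k)
      rwa [hmu k, one_mul] at this
    have h3 : ‖z₀ - q k‖ ≤ Real.sqrt (2 - 2 * Real.cos (1 / (k + 1))) := by
      have hinner : Real.cos (1 / (k + 1)) ≤ ⟪z₀, q k⟫ := by
        apply inner_ge_of_sdist_le hz₀u (hqu k) (hqd k).le
        have : (1 : ℝ) / (k + 1) ≤ 1 := by
          rw [div_le_one (by positivity)]
          linarith [Nat.cast_nonneg (α := ℝ) k]
        linarith [Real.pi_gt_three]
      have hsq : ‖z₀ - q k‖ ^ 2 ≤ 2 - 2 * Real.cos (1 / (k + 1)) := by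
        rw [norm_sub_sq_real, hz₀u, hqu k]
        nlinarith [hinner]
      calc ‖z₀ - q k‖ = Real.sqrt (‖z₀ - q k‖ ^ 2) :=
            (Real.sqrt_sq (norm_nonneg _)).symm
        _ ≤ _ := Real.sqrt_le_sqrt hsq
    linarith [hmq k]
  have hlb : ∀ k : ℕ, 0 ≤ ⟪ms k, z₀⟫ := fun k => hmnn k z₀ hz₀W
  -- subsequential limit of the poles
  have hmem : ∀ k : ℕ, ms k ∈ Metric.sphere (0 : Pt n) 1 := by
    intro k
    simp [Metric.mem_sphere, dist_eq_norm, hmu k]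
  obtain ⟨mstar, hmstar, φ, hφ, hφtend⟩ :=
    (isCompact_sphere (0 : Pt n) 1).tendsto_subseq hmem
  have hmstaru : ‖mstar‖ = 1 := by
    have := hmstar
    simpa [Metric.mem_sphere, dist_eq_norm] using this
  refine ⟨mstar, hmstaru, ?_, ?_⟩
  · intro p hp
    have htend : Filter.Tendsto (fun j => ⟪ms (φ j), p⟫) Filter.atTop
        (nhds ⟪mstar, p⟫) := hφtend.inner tendsto_const_nhds
    exact ge_of_tendsto htend (Filter.Eventually.of_forall fun j => hmnn _ p hp)
  · have htend : Filter.Tendsto (fun j => ⟪ms (φ j), z₀⟫) Filter.atTop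
        (nhds ⟪mstar, z₀⟫) := hφtend.inner tendsto_const_nhds
    have hge : 0 ≤ ⟪mstar, z₀⟫ :=
      ge_of_tendsto htend (Filter.Eventually.of_forall fun j => hlb _)
    have hbnd0 : Filter.Tendsto
        (fun j : ℕ => Real.sqrt (2 - 2 * Real.cos (1 / (j + 1)))) Filter.atTop
        (nhds 0) := by
      have h1 : Filter.Tendsto (fun j : ℕ => (1 : ℝ) / (j + 1)) Filter.atTop
          (nhds 0) := tendsto_one_div_add_atTop_nhds_zero_nat
      have hcont : Continuous fun x : ℝ => Real.sqrt (2 - 2 * Real.cos x) := by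
        continuity
      have := (hcont.tendsto 0).comp h1
      simpa [Function.comp_def] using this
    have hcomp : ∀ j : ℕ,
        ⟪ms (φ j), z₀⟫ ≤ Real.sqrt (2 - 2 * Real.cos (1 / (j + 1))) := by
      intro j
      have h1 := hub (φ j)
      have h2 : Real.sqrt (2 - 2 * Real.cos (1 / (φ j + 1)))
          ≤ Real.sqrt (2 - 2 * Real.cos (1 / (j + 1))) := by
        apply Real.sqrt_le_sqrt
        have hjj : (j : ℝ) ≤ (φ j : ℝ) := by exact_mod_cast hφ.le_apply
        have hfrac : (1 : ℝ) / (φ j + 1) ≤ 1 / (j + 1) := by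
          apply div_le_div_of_nonneg_left (by norm_num) (by positivity)
          linarith
        have hone : (1 : ℝ) / (j + 1) ≤ 1 := by
          rw [div_le_one (by positivity)]
          linarith [Nat.cast_nonneg (α := ℝ) j]
        have hcos := Real.cos_le_cos_of_nonneg_of_le_pi
          (x := 1 / ((φ j : ℝ) + 1)) (y := 1 / ((j : ℝ) + 1))
          (by positivity) (by linarith [Real.pi_gt_three]) hfrac
        linarith
      exact h1.trans h2
    have hle : ⟪mstar, z₀⟫ ≤ 0 :=
      le_of_tendsto_of_tendsto htend hbnd0
        (Filter.Eventually.of_forall hcomp)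
    linarith

end SCW
namespace SCW

open Filter

variable {n : ℕ} {W : Set (Pt n)}

lemma lune_ge_width {m k : Pt n} {w : ℝ} (hwidth : widthAt m W = w)
    (hk : Supports k W) : w ≤ luneThickness m k := by
  rw [← hwidth]
  unfold widthAt
  apply csInf_le
  · refine ⟨0, ?_⟩
    rintro t ⟨k'', -, rfl⟩
    exact luneThickness_nonneg _ _
  · exact ⟨k, hk, rfl⟩

lemma supports_touch (hB : SphConvexBody W) {k : Pt n} (hk : Supports k W) :
    ∃ p, p ∈ W ∧ ⟪k, p⟫ = 0 := by
  obtain ⟨p, hp, hd⟩ := hk.2.2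
  refine ⟨p, hp, ?_⟩
  have := cos_sdist hk.1 (mem_unit hB hp)
  rw [hd, Real.cos_pi_div_two] at this
  exact this.symm

lemma exists_opposite {m : Pt n} {w : ℝ} (hB : SphConvexBody W)
    (hm : Supports m W) (hwidth : widthAt m W = w) (hw0 : 0 < w)
    (hw : w < π / 2) :
    ∃ k : Pt n, Supports k W ∧ ⟪m, k⟫ = -Real.cos w := by
  have hmu : ‖m‖ = 1 := hm.1
  obtain ⟨xi, hxi⟩ := hB.2.2
  have hxiW : xi ∈ W := hxi.1
  have hmpos : 0 < ⟪m, xi⟫ :=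
    interior_pos hB hxi hmu (fun p hp => supports_nonneg hB hm hp)
  set b : ℕ → ℝ := fun j => w + (π / 2 - w) / (2 * (j + 1)) with hbdef
  have hbw : ∀ j : ℕ, w < b j := by
    intro j
    have h0 : 0 < (π / 2 - w) / (2 * ((j : ℝ) + 1)) :=
      div_pos (by linarith) (by positivity)
    simp only [hbdef]
    linarith
  have hbpi : ∀ j : ℕ, b j < π / 2 := by
    intro j
    have h1 : (π / 2 - w) / (2 * ((j : ℝ) + 1)) < π / 2 - w := by
      rw [div_lt_iff₀ (by positivity)]
      nlinarith [Nat.cast_nonneg (α := ℝ) j]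
    simp only [hbdef]
    linarith
  have hb0 : ∀ j : ℕ, 0 ≤ b j := fun j => (hw0.trans (hbw j)).le
  have hbpi' : ∀ j : ℕ, b j ≤ π :=
    fun j => ((hbpi j).trans (half_lt_self Real.pi_pos)).le
  have far : ∀ j : ℕ, ∃ k, Supports k W ∧ ⟪m, k⟫ < -Real.cos (b j) :=
    fun j => exists_far_support hm hwidth (hbw j) (hbpi j)
  choose ks hks hksfar using far
  have hge : ∀ j : ℕ, -Real.cos w ≤ ⟪m, ks j⟫ := by
    intro j
    have hsup := hks j
    have hku : ‖ks j‖ = 1 := hsup.1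
    have hne2 : ks j ≠ -m := by
      intro he
      have h1 := supports_nonneg hB hsup hxiW
      rw [he, inner_neg_left] at h1
      linarith
    rcases eq_or_ne (ks j) m with he | hne1
    · rw [he, unit_inner_self hmu]
      linarith [Real.neg_one_le_cos w, Real.cos_le_one w]
    · have hwle : w ≤ luneThickness m (ks j) := lune_ge_width hwidth hsup
      have h1 : ⟪m, ks j⟫ < 1 := inner_lt_one_of_ne hmu hku hne1.symm
      have h2 : -1 < ⟪m, ks j⟫ := neg_one_lt_inner_of_ne hmu hku hne2
      rw [luneThickness_formula hmu hku h1 h2] at hwle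
      have h3 := Real.cos_le_cos_of_nonneg_of_le_pi hw0.le
        (Real.arccos_le_pi _) hwle
      rw [Real.cos_arccos (by linarith) (by linarith)] at h3
      linarith
  have hmem : ∀ j : ℕ, ks j ∈ Metric.sphere (0 : Pt n) 1 := by
    intro j
    simp [Metric.mem_sphere, dist_eq_norm, (hks j).1]
  obtain ⟨kstar, hkmem, φ, hφ, hφt⟩ :=
    (isCompact_sphere (0 : Pt n) 1).tendsto_subseq hmem
  have hkstaru : ‖kstar‖ = 1 := by
    simpa [Metric.mem_sphere, dist_eq_norm] using hkmem
  have htendi : Tendsto (fun j => ⟪m, ks (φ j)⟫) atTop (nhds ⟪m, kstar⟫) :=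
    Filter.Tendsto.inner tendsto_const_nhds hφt
  have hbj : Tendsto b atTop (nhds w) := by
    have h1 : Tendsto (fun j : ℕ => (1 : ℝ) / (j + 1)) atTop (nhds 0) :=
      tendsto_one_div_add_atTop_nhds_zero_nat
    have h2 : Tendsto (fun j : ℕ => w + (π / 2 - w) / 2 * (1 / (j + 1))) atTop
        (nhds (w + (π / 2 - w) / 2 * 0)) :=
      tendsto_const_nhds.add (h1.const_mul _)
    rw [mul_zero, add_zero] at h2
    convert h2 using 2 with j
    simp only [hbdef]
    field_simp
  have hup : Tendsto (fun j : ℕ => -Real.cos (b j)) atTop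
      (nhds (-Real.cos w)) := ((Real.continuous_cos.tendsto w).comp hbj).neg
  have hle : ⟪m, kstar⟫ ≤ -Real.cos w := by
    refine le_of_tendsto_of_tendsto htendi hup (Eventually.of_forall ?_)
    intro j
    show ⟪m, ks (φ j)⟫ ≤ -Real.cos (b j)
    have h1 := hksfar (φ j)
    have hmono : b (φ j) ≤ b j := by
      have hjj : (j : ℝ) ≤ (φ j : ℝ) := by exact_mod_cast hφ.le_apply
      simp only [hbdef]
      have : (π / 2 - w) / (2 * ((φ j : ℝ) + 1)) ≤ (π / 2 - w) / (2 * ((j : ℝ) + 1)) := by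
        apply div_le_div_of_nonneg_left (by linarith) (by positivity)
        linarith
      linarith
    have hcos : Real.cos (b j) ≤ Real.cos (b (φ j)) :=
      Real.cos_le_cos_of_nonneg_of_le_pi (hb0 (φ j)) (hbpi' j) hmono
    linarith
  have hge' : -Real.cos w ≤ ⟪m, kstar⟫ :=
    ge_of_tendsto htendi (Eventually.of_forall fun j => hge (φ j))
  have heq : ⟪m, kstar⟫ = -Real.cos w := le_antisymm hle hge'
  have hknn : ∀ p ∈ W, 0 ≤ ⟪kstar, p⟫ := by
    intro p hp
    have htend : Tendsto (fun j => ⟪ks (φ j), p⟫) atTop (nhds ⟪kstar, p⟫) :=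
      Filter.Tendsto.inner hφt tendsto_const_nhds
    exact ge_of_tendsto htend
      (Eventually.of_forall fun j => supports_nonneg hB (hks (φ j)) hp)
  have htouch := fun j => supports_touch hB (hks j)
  choose ts htsW hts0 using htouch
  obtain ⟨pstar, hpstarW, ψ, hψ, hψt⟩ :=
    (isCompact_W hB).tendsto_subseq (x := fun i => ts (φ i))
      (fun i => htsW (φ i))
  have hkφψ : Tendsto (fun i => ks (φ (ψ i))) atTop (nhds kstar) :=
    hφt.comp hψ.tendsto_atTop
  have hψt' : Tendsto (fun i => ts (φ (ψ i))) atTop (nhds pstar) := hψt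
  have hz : Tendsto (fun i => ⟪ks (φ (ψ i)), ts (φ (ψ i))⟫) atTop
      (nhds ⟪kstar, pstar⟫) := Filter.Tendsto.inner hkφψ hψt'
  have h0 : ⟪kstar, pstar⟫ = 0 := by
    have hconst : (fun i => (⟪ks (φ (ψ i)), ts (φ (ψ i))⟫ : ℝ)) = fun _ => (0 : ℝ) :=
      funext fun i => hts0 _
    rw [hconst] at hz
    exact tendsto_nhds_unique hz tendsto_const_nhds
  exact ⟨kstar, supports_mk hB hkstaru hknn hpstarW h0, heq⟩

end SCW
namespace SCW

open Filter

variable {n : ℕ} {W : Set (Pt n)}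

set_option maxHeartbeats 1000000 in
lemma center_in_body (hB : SphConvexBody W) (htwo : ∃ a ∈ W, ∃ b ∈ W, a ≠ b)
    {m kstar : Pt n} {w : ℝ} (hm : Supports m W) (hwidth : widthAt m W = w)
    (hw0 : 0 < w) (hw : w < π / 2) (hk : Supports kstar W)
    (hmk : ⟪m, kstar⟫ = -Real.cos w) :
    (Real.sin w)⁻¹ • (m + Real.cos w • kstar) ∈ W := by
  have hSpos : 0 < Real.sin w :=
    Real.sin_pos_of_pos_of_lt_pi hw0 (hw.trans (half_lt_self Real.pi_pos))
  have hcw : 0 < Real.cos w :=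
    Real.cos_pos_of_mem_Ioo ⟨by linarith [Real.pi_pos], hw⟩
  have hmu : ‖m‖ = 1 := hm.1
  have hku : ‖kstar‖ = 1 := hk.1
  have hpyth : Real.sin w ^ 2 = 1 - Real.cos w ^ 2 := by
    linear_combination Real.sin_sq_add_cos_sq w
  obtain ⟨u, hu⟩ : ∃ u : Pt n, u = m + Real.cos w • kstar := ⟨_, rfl⟩
  have hnormu : ‖u‖ = Real.sin w := by
    have h2 : ‖u‖ ^ 2 = Real.sin w ^ 2 := by
      rw [hu, norm_add_sq_real, hmu, norm_smul, hku, real_inner_smul_right,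
        hmk, Real.norm_eq_abs, mul_one, sq_abs, hpyth]
      ring
    rw [← Real.sqrt_sq (norm_nonneg u), h2, Real.sqrt_sq hSpos.le]
  obtain ⟨c', hc'⟩ : ∃ c' : Pt n, c' = (Real.sin w)⁻¹ • u := ⟨_, rfl⟩
  have hc'u : ‖c'‖ = 1 := by
    rw [hc', norm_smul, hnormu, Real.norm_eq_abs, abs_inv, abs_of_pos hSpos,
      inv_mul_cancel₀ hSpos.ne']
  have hkc' : ⟪kstar, c'⟫ = 0 := by
    rw [hc', real_inner_smul_right, hu, inner_add_right, real_inner_smul_right,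
      real_inner_comm m kstar, hmk, unit_inner_self hku]
    ring
  by_contra hc'W
  rw [← hu, ← hc'] at hc'W
  obtain ⟨msep, pbar, hmsu, hmsnn, hpbarW, hmsp0, hmsq, hmax⟩ :=
    exists_sep_support hB htwo hc'u hc'W
  have hcms : ⟪c', msep⟫ < 0 := by
    rw [real_inner_comm msep c']
    exact hmsq
  have hepos : 0 < -⟪c', msep⟫ := by linarith
  obtain ⟨t₁, ht₁⟩ : ∃ t : ℝ, t = Real.sin w * -⟪c', msep⟫ / Real.cos w := ⟨_, rfl⟩
  have ht₁pos : 0 < t₁ := by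
    rw [ht₁]; exact div_pos (mul_pos hSpos hepos) hcw
  have ht₁e : Real.cos w * t₁ = Real.sin w * -⟪c', msep⟫ := by
    rw [ht₁]
    field_simp
  obtain ⟨k₂, hk₂⟩ : ∃ k : Pt n, k = kstar + t₁ • msep := ⟨_, rfl⟩
  have hkey : ⟪m, msep⟫ + Real.cos w * ⟪kstar, msep⟫ = Real.sin w * ⟪c', msep⟫ := by
    have h1 : ⟪c', msep⟫ = (Real.sin w)⁻¹ * ⟪u, msep⟫ := by
      rw [hc', real_inner_smul_left]
    have h2 : ⟪u, msep⟫ = ⟪m, msep⟫ + Real.cos w * ⟪kstar, msep⟫ := by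
      rw [hu, inner_add_left, real_inner_smul_left]
    rw [h1, h2, ← mul_assoc, mul_inv_cancel₀ hSpos.ne', one_mul]
  have hnk₂sq : ‖k₂‖ ^ 2 = 1 + 2 * t₁ * ⟪kstar, msep⟫ + t₁ ^ 2 := by
    rw [hk₂, norm_add_sq_real, hku, norm_smul, hmsu, real_inner_smul_right,
      Real.norm_eq_abs, mul_one, sq_abs]
    ring
  have hk₂ne : k₂ ≠ 0 := by
    intro h0
    have hz : ⟪k₂, c'⟫ = 0 := by rw [h0, inner_zero_left]
    rw [hk₂, inner_add_left, real_inner_smul_left, hkc'] at hz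
    have hneg : t₁ * ⟪msep, c'⟫ < 0 := mul_neg_of_pos_of_neg ht₁pos hmsq
    linarith
  have hnk₂pos : 0 < ‖k₂‖ := norm_pos_iff.mpr hk₂ne
  have hBval : 1 + t₁ * ⟪kstar, msep⟫ + t₁ ^ 2 / 2 = (‖k₂‖ ^ 2 + 1) / 2 := by
    rw [hnk₂sq]; ring
  have hBd : ‖k₂‖ ≤ 1 + t₁ * ⟪kstar, msep⟫ + t₁ ^ 2 / 2 := by
    rw [hBval]
    nlinarith [sq_nonneg (‖k₂‖ - 1)]
  have hineq : ⟪m, k₂⟫ < -Real.cos w * ‖k₂‖ := by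
    have hL : ⟪m, k₂⟫ = -Real.cos w + t₁ * ⟪m, msep⟫ := by
      rw [hk₂, inner_add_right, real_inner_smul_right, hmk]
    have hkey' : ⟪m, msep⟫ + Real.cos w * ⟪kstar, msep⟫
        = -(Real.sin w * -⟪c', msep⟫) := by
      rw [hkey]; ring
    have hexpr : -Real.cos w + t₁ * ⟪m, msep⟫
        - -Real.cos w * (1 + t₁ * ⟪kstar, msep⟫ + t₁ ^ 2 / 2)
        = -(t₁ * (Real.sin w * -⟪c', msep⟫)) / 2 := by
      linear_combination t₁ * hkey' + (t₁ / 2) * ht₁e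
    have hprod : 0 < t₁ * (Real.sin w * -⟪c', msep⟫) :=
      mul_pos ht₁pos (mul_pos hSpos hepos)
    have h2 : -Real.cos w + t₁ * ⟪m, msep⟫
        < -Real.cos w * (1 + t₁ * ⟪kstar, msep⟫ + t₁ ^ 2 / 2) := by
      linarith
    have h3 : Real.cos w * ‖k₂‖ ≤ Real.cos w *
        (1 + t₁ * ⟪kstar, msep⟫ + t₁ ^ 2 / 2) :=
      mul_le_mul_of_nonneg_left hBd hcw.le
    have h4 := neg_le_neg h3
    rw [← neg_mul, ← neg_mul] at h4
    rw [hL]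
    linarith
  -- push to touch
  obtain ⟨xi, hxi⟩ := hB.2.2
  have hxiW : xi ∈ W := hxi.1
  have hmxi : 0 < ⟪m, xi⟫ :=
    interior_pos hB hxi hmu (fun p hp => supports_nonneg hB hm hp)
  have hminall : ∀ s : ℝ, ∃ p ∈ W, ∀ p' ∈ W,
      ⟪k₂ - s • m, p⟫ ≤ ⟪k₂ - s • m, p'⟫ := by
    intro s
    obtain ⟨p₀, hp₀, hmax'⟩ := exists_max_inner hB (-(k₂ - s • m))
    refine ⟨p₀, hp₀, fun p' hp' => ?_⟩
    have h1 := hmax' p' hp'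
    rw [inner_neg_left, inner_neg_left] at h1
    linarith
  choose P hPW hPmin using hminall
  have hF0 : 0 ≤ ⟪k₂ - (0 : ℝ) • m, P 0⟫ := by
    have heq : ⟪k₂ - (0 : ℝ) • m, P 0⟫ = ⟪kstar, P 0⟫ + t₁ * ⟪msep, P 0⟫ := by
      rw [zero_smul, sub_zero, hk₂, inner_add_left, real_inner_smul_left]
    rw [heq]
    have h1 := supports_nonneg hB hk (hPW 0)
    have h2 := hmsnn (P 0) (hPW 0)
    linarith [mul_nonneg ht₁pos.le h2]
  have hk₂xi : 0 ≤ ⟪k₂, xi⟫ := by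
    have heq : ⟪k₂, xi⟫ = ⟪kstar, xi⟫ + t₁ * ⟪msep, xi⟫ := by
      rw [hk₂, inner_add_left, real_inner_smul_left]
    rw [heq]
    have h1 := supports_nonneg hB hk hxiW
    have h2 := hmsnn xi hxiW
    linarith [mul_nonneg ht₁pos.le h2]
  obtain ⟨s₁, hs₁def⟩ : ∃ s : ℝ, s = (⟪k₂, xi⟫ + 1) / ⟪m, xi⟫ := ⟨_, rfl⟩
  have hs₁pos : 0 < s₁ := by
    rw [hs₁def]; exact div_pos (by linarith) hmxi
  have hFs₁ : ⟪k₂ - s₁ • m, P s₁⟫ < 0 := by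
    have hle := hPmin s₁ xi hxiW
    have heval : ⟪k₂ - s₁ • m, xi⟫ = -1 := by
      rw [inner_sub_left, real_inner_smul_left, hs₁def,
        div_mul_cancel₀ _ hmxi.ne']
      ring
    linarith
  have hFlip : ∀ s s' : ℝ, ⟪k₂ - s • m, P s⟫ - ⟪k₂ - s' • m, P s'⟫ ≤ |s - s'| := by
    intro s s'
    have h1 : ⟪k₂ - s • m, P s⟫ ≤ ⟪k₂ - s • m, P s'⟫ := hPmin s (P s') (hPW s')
    have h2 : ⟪k₂ - s • m, P s'⟫
        = ⟪k₂ - s' • m, P s'⟫ + (s' - s) * ⟪m, P s'⟫ := by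
      rw [inner_sub_left, inner_sub_left, real_inner_smul_left,
        real_inner_smul_left]
      ring
    have habs : |⟪m, P s'⟫| ≤ 1 := by
      have h3 := abs_real_inner_le_norm m (P s')
      rwa [hmu, mem_unit hB (hPW s'), mul_one] at h3
    have h3 : (s' - s) * ⟪m, P s'⟫ ≤ |s - s'| := by
      calc (s' - s) * ⟪m, P s'⟫ ≤ |(s' - s) * ⟪m, P s'⟫| := le_abs_self _
        _ = |s' - s| * |⟪m, P s'⟫| := abs_mul _ _
        _ ≤ |s' - s| * 1 := mul_le_mul_of_nonneg_left habs (abs_nonneg _)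
        _ = |s - s'| := by rw [mul_one, abs_sub_comm]
    linarith
  have hFcont : Continuous fun s => ⟪k₂ - s • m, P s⟫ := by
    have hlip : LipschitzWith 1 fun s => ⟪k₂ - s • m, P s⟫ := by
      apply LipschitzWith.of_dist_le_mul
      intro s s'
      rw [Real.dist_eq, Real.dist_eq, NNReal.coe_one, one_mul]
      rw [abs_sub_le_iff]
      constructor
      · exact hFlip s s'
      · have := hFlip s' s
        rwa [abs_sub_comm] at this
    exact hlip.continuous
  have hIVT := intermediate_value_Icc' hs₁pos.le hFcont.continuousOn
    (a := (0 : ℝ)) (b := s₁)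
  obtain ⟨s₀, hs₀mem, hFs₀⟩ := hIVT ⟨hFs₁.le, hF0⟩
  have hs₀0 : 0 ≤ s₀ := hs₀mem.1
  obtain ⟨k₃u, hk₃udef⟩ : ∃ k : Pt n, k = k₂ - s₀ • m := ⟨_, rfl⟩
  have hFs₀' : ⟪k₃u, P s₀⟫ = 0 := by rw [hk₃udef]; exact hFs₀
  have hk₃une : k₃u ≠ 0 := by
    intro h0
    have h1 : k₂ = s₀ • m := by
      rw [hk₃udef] at h0
      exact sub_eq_zero.mp h0
    have h2 : ⟪m, k₂⟫ = s₀ := by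
      rw [h1, real_inner_smul_right, unit_inner_self hmu, mul_one]
    have h3 := mul_pos hcw hnk₂pos
    rw [neg_mul] at hineq
    linarith
  have hk₃upos : 0 < ‖k₃u‖ := norm_pos_iff.mpr hk₃une
  obtain ⟨k₃, hk₃def⟩ : ∃ k : Pt n, k = ‖k₃u‖⁻¹ • k₃u := ⟨_, rfl⟩
  have hk₃norm : ‖k₃‖ = 1 := by
    rw [hk₃def, norm_smul, Real.norm_eq_abs, abs_inv, abs_of_pos hk₃upos,
      inv_mul_cancel₀ hk₃upos.ne']
  have hk₃nn : ∀ p ∈ W, 0 ≤ ⟪k₃, p⟫ := by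
    intro p hp
    have h1 : ⟪k₃u, P s₀⟫ ≤ ⟪k₃u, p⟫ := by rw [hk₃udef]; exact hPmin s₀ p hp
    rw [hFs₀'] at h1
    rw [hk₃def, real_inner_smul_left]
    exact mul_nonneg (inv_nonneg.mpr hk₃upos.le) h1
  have htouch₃ : ⟪k₃, P s₀⟫ = 0 := by
    rw [hk₃def, real_inner_smul_left, hFs₀', mul_zero]
  have hsup₃ : Supports k₃ W := supports_mk hB hk₃norm hk₃nn (hPW s₀) htouch₃
  have hmk₃u : ⟪m, k₃u⟫ = ⟪m, k₂⟫ - s₀ := by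
    rw [hk₃udef, inner_sub_right, real_inner_smul_right, unit_inner_self hmu]
    ring
  have hnormdiff : ‖k₃u‖ - ‖k₂‖ ≤ s₀ := by
    have h2 : k₃u - k₂ = -(s₀ • m) := by rw [hk₃udef]; abel
    calc ‖k₃u‖ - ‖k₂‖ ≤ ‖k₃u - k₂‖ := norm_sub_norm_le _ _
      _ = s₀ := by
          rw [h2, norm_neg, norm_smul, hmu, Real.norm_eq_abs, mul_one,
            abs_of_nonneg hs₀0]
  have hgoal : ⟪m, k₂⟫ - s₀ < -Real.cos w * ‖k₃u‖ := by
    have h1 : Real.cos w * (‖k₃u‖ - ‖k₂‖) ≤ Real.cos w * s₀ :=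
      mul_le_mul_of_nonneg_left hnormdiff hcw.le
    have h2 : Real.cos w * s₀ ≤ s₀ :=
      mul_le_of_le_one_left hs₀0 (Real.cos_le_one w)
    have e1 : Real.cos w * (‖k₃u‖ - ‖k₂‖)
        = Real.cos w * ‖k₃u‖ - Real.cos w * ‖k₂‖ := by ring
    have hineq' := hineq
    rw [neg_mul] at hineq'
    rw [neg_mul]
    linarith
  have hmk₃ : ⟪m, k₃⟫ < -Real.cos w := by
    rw [hk₃def, real_inner_smul_right]
    rw [inv_mul_eq_div, div_lt_iff₀ hk₃upos]
    rw [hmk₃u]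
    calc ⟪m, k₂⟫ - s₀ < -Real.cos w * ‖k₃u‖ := hgoal
      _ = _ := by ring
  have hne2 : k₃ ≠ -m := by
    intro he
    have h1 := hk₃nn xi hxiW
    rw [he, inner_neg_left] at h1
    linarith
  have h1' : ⟪m, k₃⟫ < 1 := by linarith
  have h2' : -1 < ⟪m, k₃⟫ := neg_one_lt_inner_of_ne hmu hk₃norm hne2
  have hlt : luneThickness m k₃ < w := by
    rw [luneThickness_formula hmu hk₃norm h1' h2']
    by_contra hge2
    push_neg at hge2
    have h3 := Real.cos_le_cos_of_nonneg_of_le_pi hw0.le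
      (Real.arccos_le_pi _) hge2
    rw [Real.cos_arccos (by linarith) (by linarith)] at h3
    linarith
  have hwle := lune_ge_width hwidth hsup₃
  linarith

end SCW
namespace SCW

variable {n : ℕ}

lemma center_unit {a b : Pt n} {w : ℝ} (ha : ‖a‖ = 1) (hb : ‖b‖ = 1)
    (hS : 0 < Real.sin w) (hab : ⟪a, b⟫ = -Real.cos w) :
    ‖(Real.sin w)⁻¹ • (a + Real.cos w • b)‖ = 1 := by
  have hpyth : Real.sin w ^ 2 = 1 - Real.cos w ^ 2 := by
    linear_combination Real.sin_sq_add_cos_sq w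
  have h2 : ‖a + Real.cos w • b‖ ^ 2 = Real.sin w ^ 2 := by
    rw [norm_add_sq_real, ha, norm_smul, hb, real_inner_smul_right, hab,
      Real.norm_eq_abs, mul_one, sq_abs, hpyth]
    ring
  have h3 : ‖a + Real.cos w • b‖ = Real.sin w := by
    rw [← Real.sqrt_sq (norm_nonneg _), h2, Real.sqrt_sq hS.le]
  rw [norm_smul, h3, Real.norm_eq_abs, abs_inv, abs_of_pos hS,
    inv_mul_cancel₀ hS.ne']

end SCW

theorem constWidth_lt_pi_div_two_strictlyConvex (d : ℕ) (hd : 2 ≤ d)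
    (W : Set (Pt (d+1))) (w : ℝ) (hW : ConstWidth W w) (hw : w < π/2) :
    StrictlyConvexBody W := by
  intro x₀ hx₀ y₀ hy₀ hne
  by_contra hcon
  push_neg at hcon
  obtain ⟨hB, hconst⟩ := hW
  have hx₀W : x₀ ∈ W := hx₀.1
  have hy₀W : y₀ ∈ W := hy₀.1
  have hx₀u : ‖x₀‖ = 1 := SCW.mem_unit hB hx₀W
  have hy₀u : ‖y₀‖ = 1 := SCW.mem_unit hB hy₀W
  have htwo : ∃ a ∈ W, ∃ b ∈ W, a ≠ b := ⟨x₀, hx₀W, y₀, hy₀W, hne⟩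
  have hc1 : ⟪x₀, y₀⟫ < 1 := SCW.inner_lt_one_of_ne hx₀u hy₀u hne
  have hc2 : -1 < ⟪x₀, y₀⟫ :=
    SCW.neg_one_lt_inner_of_ne hx₀u hy₀u (SCW.no_antipode hB hx₀W hy₀W)
  have hN2 : ‖x₀ + y₀‖ ^ 2 = 2 + 2 * ⟪x₀, y₀⟫ := by
    rw [norm_add_sq_real, hx₀u, hy₀u]; ring
  have hne0 : x₀ + y₀ ≠ 0 := by
    intro h
    rw [h, norm_zero] at hN2
    nlinarith [hN2, hc2]
  have hNpos : 0 < ‖x₀ + y₀‖ := norm_pos_iff.mpr hne0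
  obtain ⟨z₀, hz₀⟩ : ∃ z : Pt (d+1), z = ‖x₀ + y₀‖⁻¹ • (x₀ + y₀) := ⟨_, rfl⟩
  have hz₀u : ‖z₀‖ = 1 := by
    rw [hz₀, norm_smul, Real.norm_eq_abs, abs_inv, abs_of_pos hNpos,
      inv_mul_cancel₀ hNpos.ne']
  have hxz : ⟪x₀, z₀⟫ = ‖x₀ + y₀‖⁻¹ * (1 + ⟪x₀, y₀⟫) := by
    rw [hz₀, real_inner_smul_right, inner_add_right, SCW.unit_inner_self hx₀u]
  have hyz : ⟪y₀, z₀⟫ = ‖x₀ + y₀‖⁻¹ * (1 + ⟪x₀, y₀⟫) := by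
    rw [hz₀, real_inner_smul_right, inner_add_right, SCW.unit_inner_self hy₀u,
      real_inner_comm x₀ y₀]
    ring
  have hθ0 : 0 ≤ sdist x₀ y₀ := SCW.sdist_nonneg x₀ y₀
  have hθπ : sdist x₀ y₀ ≤ π := SCW.sdist_le_pi x₀ y₀
  have hval : ‖x₀ + y₀‖⁻¹ * (1 + ⟪x₀, y₀⟫) = Real.cos (sdist x₀ y₀ / 2) := by
    have hcosθ : Real.cos (sdist x₀ y₀) = ⟪x₀, y₀⟫ := SCW.cos_sdist hx₀u hy₀u
    have hhalf : Real.cos (sdist x₀ y₀ / 2)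
        = Real.sqrt ((1 + ⟪x₀, y₀⟫) / 2) := by
      rw [← hcosθ]
      exact Real.cos_half (by linarith [Real.pi_pos]) hθπ
    have hApos : 0 < 2 + 2 * ⟪x₀, y₀⟫ := by linarith
    have hN : ‖x₀ + y₀‖ = Real.sqrt (2 + 2 * ⟪x₀, y₀⟫) := by
      rw [← Real.sqrt_sq (norm_nonneg _), hN2]
    have h4 : Real.sqrt ((1 + ⟪x₀, y₀⟫) / 2)
        = Real.sqrt (2 + 2 * ⟪x₀, y₀⟫) / 2 := by
      rw [show ((1 : ℝ) + ⟪x₀, y₀⟫) / 2 = (2 + 2 * ⟪x₀, y₀⟫) * (1 / 2) ^ 2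
        from by ring, Real.sqrt_mul hApos.le, Real.sqrt_sq (by norm_num)]
      ring
    have hsq : Real.sqrt (2 + 2 * ⟪x₀, y₀⟫) * Real.sqrt (2 + 2 * ⟪x₀, y₀⟫)
        = 2 + 2 * ⟪x₀, y₀⟫ := Real.mul_self_sqrt hApos.le
    have hspos' : 0 < Real.sqrt (2 + 2 * ⟪x₀, y₀⟫) := Real.sqrt_pos.mpr hApos
    rw [hhalf, h4, hN]
    rw [inv_mul_eq_div, div_eq_div_iff hspos'.ne' (by norm_num : (2:ℝ) ≠ 0)]
    linarith [hsq]
  have hdxz : sdist x₀ z₀ = sdist x₀ y₀ / 2 := by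
    unfold sdist
    rw [hxz, hval]
    exact Real.arccos_cos (by linarith) (by linarith [Real.pi_pos])
  have hdzy : sdist z₀ y₀ = sdist x₀ y₀ / 2 := by
    unfold sdist
    rw [real_inner_comm y₀ z₀, hyz, hval]
    exact Real.arccos_cos (by linarith) (by linarith [Real.pi_pos])
  have harc : OnArc x₀ z₀ y₀ := by
    unfold OnArc
    rw [hdxz, hdzy]
    ring
  have hz₀bd : z₀ ∈ sphBoundary W := hcon z₀ hz₀u harc
  have hz₀W : z₀ ∈ W := hz₀bd.1
  obtain ⟨m, hmu, hmnn, hmz⟩ := SCW.boundary_support hB htwo hz₀bd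
  have hsupm : Supports m W := SCW.supports_mk hB hmu hmnn hz₀W hmz
  have hsum0 : ⟪m, x₀⟫ + ⟪m, y₀⟫ = 0 := by
    have h1 : ⟪m, z₀⟫ = ‖x₀ + y₀‖⁻¹ * (⟪m, x₀⟫ + ⟪m, y₀⟫) := by
      rw [hz₀, real_inner_smul_right, inner_add_right]
    have h5 : ‖x₀ + y₀‖⁻¹ * (⟪m, x₀⟫ + ⟪m, y₀⟫) = 0 := by rw [← h1, hmz]
    rcases mul_eq_zero.mp h5 with h | h
    · exact absurd h (inv_pos.mpr hNpos).ne'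
    · exact h
  have hmx₀ : ⟪m, x₀⟫ = 0 := by
    have h2 := hmnn x₀ hx₀W
    have h3 := hmnn y₀ hy₀W
    linarith
  have hmy₀ : ⟪m, y₀⟫ = 0 := by
    have h2 := hmnn x₀ hx₀W
    linarith
  have hwidthm : widthAt m W = w := hconst m hsupm
  have hdiam := SCW.diam_le hB htwo hconst hw
  have hw0 : 0 < w := by
    have h1 : 0 < sdist x₀ y₀ := by
      rcases lt_or_eq_of_le hθ0 with h' | h'
      · exact h'
      · exact absurd ((SCW.sdist_eq_zero_iff hx₀u hy₀u).mp h'.symm) hne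
    exact lt_of_lt_of_le h1 (hdiam x₀ hx₀W y₀ hy₀W)
  have hSpos : 0 < Real.sin w :=
    Real.sin_pos_of_pos_of_lt_pi hw0 (hw.trans (half_lt_self Real.pi_pos))
  have hcw : 0 < Real.cos w :=
    Real.cos_pos_of_mem_Ioo ⟨by linarith [Real.pi_pos], hw⟩
  obtain ⟨kstar, hksup, hmk⟩ := SCW.exists_opposite hB hsupm hwidthm hw0 hw
  have hku : ‖kstar‖ = 1 := hksup.1
  have hc'W := SCW.center_in_body hB htwo hsupm hwidthm hw0 hw hksup hmk
  have hc'u : ‖(Real.sin w)⁻¹ • (m + Real.cos w • kstar)‖ = 1 :=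
    SCW.center_unit hmu hku hSpos hmk
  have hkm : ⟪kstar, m⟫ = -Real.cos w := by
    rw [real_inner_comm m kstar]
    exact hmk
  obtain ⟨C, hC⟩ : ∃ C : Pt (d+1),
      C = (Real.sin w)⁻¹ • (kstar + Real.cos w • m) := ⟨_, rfl⟩
  have hCu : ‖C‖ = 1 := by
    rw [hC]
    exact SCW.center_unit hku hmu hSpos hkm
  have final : ∀ u₀ : Pt (d+1), u₀ ∈ W → ‖u₀‖ = 1 → ⟪m, u₀⟫ = 0 → u₀ = C := by
    intro u₀ hu₀W hu₀u hmu₀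
    have hum : ⟪u₀, m⟫ = 0 := (real_inner_comm m u₀).trans hmu₀
    have h1 : sdist u₀ ((Real.sin w)⁻¹ • (m + Real.cos w • kstar)) ≤ w :=
      hdiam u₀ hu₀W _ hc'W
    have hcc : Real.cos w ≤ ⟪u₀, (Real.sin w)⁻¹ • (m + Real.cos w • kstar)⟫ :=
      SCW.inner_ge_of_sdist_le hu₀u hc'u h1 (by linarith [Real.pi_pos])
    have h2 : ⟪u₀, (Real.sin w)⁻¹ • (m + Real.cos w • kstar)⟫
        = (Real.sin w)⁻¹ * (Real.cos w * ⟪u₀, kstar⟫) := by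
      rw [real_inner_smul_right, inner_add_right, real_inner_smul_right, hum]
      ring
    have h3 : Real.sin w ≤ ⟪u₀, kstar⟫ := by
      rw [h2] at hcc
      have h5 := mul_le_mul_of_nonneg_left hcc hSpos.le
      rw [← mul_assoc, mul_inv_cancel₀ hSpos.ne', one_mul] at h5
      have h6 : Real.cos w * Real.sin w ≤ Real.cos w * ⟪u₀, kstar⟫ := by
        have : Real.sin w * Real.cos w = Real.cos w * Real.sin w := mul_comm _ _
        linarith
      exact le_of_mul_le_mul_left h6 hcw
    have h5 : ⟪u₀, C⟫ = (Real.sin w)⁻¹ * ⟪u₀, kstar⟫ := by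
      rw [hC, real_inner_smul_right, inner_add_right, real_inner_smul_right,
        hum]
      ring
    have h6 : 1 ≤ ⟪u₀, C⟫ := by
      rw [h5, inv_mul_eq_div, le_div_iff₀ hSpos, one_mul]
      exact h3
    have h7 : ⟪u₀, C⟫ ≤ 1 := SCW.inner_le_one hu₀u hCu
    exact SCW.eq_of_inner_eq_one hu₀u hCu (le_antisymm h7 h6)
  have hx := final x₀ hx₀W hx₀u hmx₀
  have hy := final y₀ hy₀W hy₀u hmy₀
  exact hne (hx.trans hy.symm)
end
end

section
/- For every spherical convex body C ⊂ S^2 of diameter at most π/2, the diameter of the set of extreme points of C equals the diameter of C. -/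
open scoped RealInnerProductSpace
open Real

noncomputable section

section Aux

lemma aux_inner_le_one {n : ℕ} {x y : Pt n} (hx : ‖x‖ = 1) (hy : ‖y‖ = 1) :
    ⟪x, y⟫ ≤ 1 := by
  have := real_inner_le_norm x y; rw [hx, hy] at this; linarith

lemma aux_neg_one_le_inner {n : ℕ} {x y : Pt n} (hx : ‖x‖ = 1) (hy : ‖y‖ = 1) :
    -1 ≤ ⟪x, y⟫ := by
  have := abs_real_inner_le_norm x y; rw [hx, hy] at this
  have := abs_le.mp this; linarith [this.1]

lemma aux_cos_sdist {n : ℕ} {x y : Pt n} (hx : ‖x‖ = 1) (hy : ‖y‖ = 1) :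
    Real.cos (sdist x y) = ⟪x, y⟫ :=
  Real.cos_arccos (aux_neg_one_le_inner hx hy) (aux_inner_le_one hx hy)

lemma aux_sdist_nonneg {n : ℕ} (x y : Pt n) : 0 ≤ sdist x y := Real.arccos_nonneg _

lemma aux_sdist_le_pi {n : ℕ} (x y : Pt n) : sdist x y ≤ π := Real.arccos_le_pi _

lemma aux_sdist_comm {n : ℕ} (x y : Pt n) : sdist x y = sdist y x := by
  unfold sdist; rw [real_inner_comm]

lemma aux_sdist_self {n : ℕ} {x : Pt n} (hx : ‖x‖ = 1) : sdist x x = 0 := by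
  unfold sdist
  rw [real_inner_self_eq_norm_sq, hx]
  simpa using Real.arccos_one

lemma aux_sdist_eq_zero {n : ℕ} {x y : Pt n} (hx : ‖x‖ = 1) (hy : ‖y‖ = 1)
    (h : sdist x y = 0) : x = y := by
  have h1 : ⟪x, y⟫ = 1 := by
    have := aux_cos_sdist hx hy
    rw [h] at this; simpa using this.symm
  exact (inner_eq_one_iff_of_norm_eq_one hx hy).mp (by exact_mod_cast h1)

lemma aux_inner_nonneg {n : ℕ} {x y : Pt n} (hx : ‖x‖ = 1) (hy : ‖y‖ = 1)
    (h : sdist x y ≤ π/2) : 0 ≤ ⟪x, y⟫ := by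
  rw [← aux_cos_sdist hx hy]
  exact Real.cos_nonneg_of_mem_Icc ⟨by linarith [aux_sdist_nonneg x y, Real.pi_pos],
    h⟩

/-- Core decomposition: a point strictly inside a short arc is a positive combination
of the endpoints with coefficient sum `> 1`. -/
lemma aux_core {n : ℕ} {a b e : Pt n} (ha : ‖a‖ = 1) (hb : ‖b‖ = 1) (he : ‖e‖ = 1)
    (hab : sdist a b ≤ π/2) (harc : OnArc a e b) (hea : e ≠ a) (heb : e ≠ b) :
    ∃ p q : ℝ, 0 < p ∧ 0 < q ∧ 1 < p + q ∧ e = p • a + q • b := by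
  set α := sdist a e with hα
  set β := sdist e b with hβ
  have hsum : α + β = sdist a b := harc
  have hα0 : 0 < α := by
    rcases lt_or_eq_of_le (aux_sdist_nonneg a e) with h | h; · exact h
    exact absurd (aux_sdist_eq_zero ha he h.symm).symm hea
  have hβ0 : 0 < β := by
    rcases lt_or_eq_of_le (aux_sdist_nonneg e b) with h | h; · exact h
    exact absurd (aux_sdist_eq_zero he hb h.symm) heb
  have hαβπ : α + β ≤ π/2 := hsum ▸ hab
  have hαπ : α < π := by nlinarith [Real.pi_pos]
  have hβπ : β < π := by nlinarith [Real.pi_pos]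
  have hs : 0 < Real.sin (α + β) := Real.sin_pos_of_pos_of_lt_pi (by linarith)
    (by nlinarith [Real.pi_pos])
  have hsa : 0 < Real.sin α := Real.sin_pos_of_pos_of_lt_pi hα0 hαπ
  have hsb : 0 < Real.sin β := Real.sin_pos_of_pos_of_lt_pi hβ0 hβπ
  refine ⟨Real.sin β / Real.sin (α + β), Real.sin α / Real.sin (α + β),
    div_pos hsb hs, div_pos hsa hs, ?_, ?_⟩
  · rw [← add_div, lt_div_iff₀ hs, one_mul]
    have hca : Real.cos α ≤ 1 := Real.cos_le_one α
    have hcb : Real.cos β < 1 := by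
      have : Real.cos β < Real.cos 0 := by
        apply Real.cos_lt_cos_of_nonneg_of_le_pi le_rfl (by linarith) hβ0
      simpa using this
    rw [Real.sin_add]
    nlinarith
  · have hia : ⟪a, e⟫ = Real.cos α := (aux_cos_sdist ha he).symm
    have hib : ⟪e, b⟫ = Real.cos β := (aux_cos_sdist he hb).symm
    have hiab : ⟪a, b⟫ = Real.cos (α + β) := by
      rw [hsum]; exact (aux_cos_sdist ha hb).symm
    set p := Real.sin β / Real.sin (α + β)
    set q := Real.sin α / Real.sin (α + β)
    set w := e - p • a - q • b with hw
    have hea2 : ⟪e, a⟫ = Real.cos α := by rw [real_inner_comm]; exact hia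
    have hbe2 : ⟪b, e⟫ = Real.cos β := by rw [real_inner_comm]; exact hib
    have hba2 : ⟪b, a⟫ = Real.cos (α + β) := by rw [real_inner_comm]; exact hiab
    have h1 : ⟪a, a⟫ = (1:ℝ) := by
      rw [real_inner_self_eq_norm_sq, ha]; norm_num
    have h2 : ⟪b, b⟫ = (1:ℝ) := by
      rw [real_inner_self_eq_norm_sq, hb]; norm_num
    have h3 : ⟪e, e⟫ = (1:ℝ) := by
      rw [real_inner_self_eq_norm_sq, he]; norm_num
    have hpq : p * Real.sin (α + β) = Real.sin β := by
      exact div_mul_cancel₀ _ hs.ne'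
    have hqq : q * Real.sin (α + β) = Real.sin α := by
      exact div_mul_cancel₀ _ hs.ne'
    have haw : ⟪a, w⟫ = 0 := by
      simp only [hw, inner_sub_right, real_inner_smul_right]
      rw [hia, h1, hiab]
      have key : (Real.cos α - p * 1 - q * Real.cos (α + β)) * Real.sin (α + β) = 0 := by
        have e1 : Real.sin ((α + β) - α) = Real.sin β := by ring_nf
        rw [Real.sin_sub] at e1
        linear_combination e1 - hpq - Real.cos (α + β) * hqq
      have := (mul_eq_zero.mp key).resolve_right hs.ne'
      linarith
    have hbw : ⟪b, w⟫ = 0 := by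
      simp only [hw, inner_sub_right, real_inner_smul_right]
      rw [hbe2, h2, hba2]
      have key : (Real.cos β - p * Real.cos (α + β) - q * 1) * Real.sin (α + β) = 0 := by
        have e1 : Real.sin ((α + β) - β) = Real.sin α := by ring_nf
        rw [Real.sin_sub] at e1
        linear_combination e1 - hqq - Real.cos (α + β) * hpq
      have := (mul_eq_zero.mp key).resolve_right hs.ne'
      linarith
    have hew : ⟪e, w⟫ = 0 := by
      simp only [hw, inner_sub_right, real_inner_smul_right]
      rw [h3, hea2, hib]
      have key : ((1:ℝ) - p * Real.cos α - q * Real.cos β) * Real.sin (α + β) = 0 := by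
        have e1 : Real.sin (α + β) = Real.sin α * Real.cos β + Real.cos α * Real.sin β :=
          Real.sin_add α β
        linear_combination e1 - Real.cos α * hpq - Real.cos β * hqq
      have := (mul_eq_zero.mp key).resolve_right hs.ne'
      linarith
    have hww : ⟪w, w⟫ = (0:ℝ) := by
      have expand : ⟪w, w⟫ = ⟪e, w⟫ - p * ⟪a, w⟫ - q * ⟪b, w⟫ := by
        rw [hw]
        simp only [inner_sub_left, real_inner_smul_left]
      rw [expand, haw, hbw, hew]; ring
    have hw0 : w = 0 := inner_self_eq_zero.mp hww
    have h6 : e - (p • a + q • b) = 0 := by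
      rw [← sub_sub]; exact hw ▸ hw0
    exact sub_eq_zero.mp h6

lemma aux_orth3 {u y a b : Pt 3} (hu : ‖u‖=1) (hy : ‖y‖=1) (ha : ‖a‖=1) (hb : ‖b‖=1)
    (huy : ⟪u,y⟫ = 0) (hau : ⟪u,a⟫ = 0) (hay : ⟪y,a⟫ = 0)
    (hbu : ⟪u,b⟫ = 0) (hby : ⟪y,b⟫ = 0) :
    a = b ∨ a = -b := by
  set t : ℝ := ⟪a,b⟫ with ht
  set c : Pt 3 := b - t • a with hc
  have haa : ⟪a,a⟫ = (1:ℝ) := by rw [real_inner_self_eq_norm_sq, ha]; norm_num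
  have hac : ⟪a,c⟫ = 0 := by
    simp only [hc, inner_sub_right, real_inner_smul_right, haa, ht]
    ring
  have huc : ⟪u,c⟫ = 0 := by
    simp only [hc, inner_sub_right, real_inner_smul_right, hau, hbu]
    ring
  have hyc : ⟪y,c⟫ = 0 := by
    simp only [hc, inner_sub_right, real_inner_smul_right, hay, hby]
    ring
  have hc0 : c = 0 := by
    by_contra hne
    set v : Fin 4 → Pt 3 := ![u, y, a, c] with hv
    have hu0 : u ≠ 0 := fun h => by rw [h] at hu; simp at hu
    have hy0 : y ≠ 0 := fun h => by rw [h] at hy; simp at hy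
    have ha0 : a ≠ 0 := fun h => by rw [h] at ha; simp at ha
    have hz : ∀ i, v i ≠ 0 := by
      intro i
      fin_cases i
      · exact hu0
      · exact hy0
      · exact ha0
      · exact hne
    have ho : ∀ i j, i ≠ j → ⟪v i, v j⟫ = 0 := by
      intro i j hij
      have huy' : ⟪y,u⟫ = (0:ℝ) := by rw [real_inner_comm]; exact huy
      have hau' : ⟪a,u⟫ = (0:ℝ) := by rw [real_inner_comm]; exact hau
      have hay' : ⟪a,y⟫ = (0:ℝ) := by rw [real_inner_comm]; exact hay
      have huc' : ⟪c,u⟫ = (0:ℝ) := by rw [real_inner_comm]; exact huc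
      have hyc' : ⟪c,y⟫ = (0:ℝ) := by rw [real_inner_comm]; exact hyc
      have hac' : ⟪c,a⟫ = (0:ℝ) := by rw [real_inner_comm]; exact hac
      fin_cases i <;> fin_cases j <;>
        first
          | exact absurd rfl hij
          | exact huy | exact hau | exact huc | exact huy' | exact hay | exact hyc
          | exact hau' | exact hay' | exact hac | exact huc' | exact hyc' | exact hac'
    have hli := linearIndependent_of_ne_zero_of_inner_eq_zero (𝕜 := ℝ) hz ho
    have hcard := hli.fintype_card_le_finrank
    rw [finrank_euclideanSpace_fin] at hcard
    simp at hcard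
  have hb' : b = t • a := by
    rw [hc] at hc0
    exact sub_eq_zero.mp hc0
  have ht1 : t = 1 ∨ t = -1 := by
    have : ‖b‖ = |t| * ‖a‖ := by rw [hb', norm_smul]; simp
    rw [ha, hb, mul_one] at this
    exact (abs_eq (by norm_num : (0:ℝ) ≤ 1)).mp this.symm
  rcases ht1 with h | h
  · left; rw [hb', h, one_smul]
  · right; rw [hb', h]; simp

/-- A point of `C` minimizing a linear functional with positive minimum is extreme. -/
lemma aux_ext1 {n : ℕ} {C : Set (Pt n)} (hC : SphConvex C)
    (hpair : ∀ p ∈ C, ∀ q ∈ C, sdist p q ≤ π/2)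
    (y : Pt n) {c : ℝ} (hc : 0 < c) (hmin : ∀ p ∈ C, c ≤ ⟪y, p⟫)
    {e : Pt n} (he : e ∈ C) (heq : ⟪y, e⟫ = c) : ExtremePt C e := by
  obtain ⟨hsub, hanti, harc⟩ := hC
  refine ⟨he, ?_, ?_, ?_⟩
  · exact fun x hx => hsub hx.1
  · intro x hx hnx
    exact hanti x hx.1 hnx.1
  · intro a haC b hbC z hz honarc
    have hzC : z ∈ C := harc a haC.1 b hbC.1 z hz honarc
    refine ⟨hzC, ?_⟩
    intro hze
    rw [Set.mem_singleton_iff] at hze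
    subst hze
    obtain ⟨p, q, hp, hq, hpq, hdec⟩ := aux_core (hsub haC.1) (hsub hbC.1) hz
      (hpair a haC.1 b hbC.1) honarc
      (fun h => haC.2 (Set.mem_singleton_iff.mpr h.symm))
      (fun h => hbC.2 (Set.mem_singleton_iff.mpr h.symm))
    have hexp : ⟪y, z⟫ = p * ⟪y, a⟫ + q * ⟪y, b⟫ := by
      rw [hdec, inner_add_right, real_inner_smul_right, real_inner_smul_right]
    have h1 : c ≤ ⟪y, a⟫ := hmin a haC.1
    have h2 : c ≤ ⟪y, b⟫ := hmin b hbC.1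
    nlinarith [heq, hexp]

/-- A point of a face (cut by a supporting functional with value 0) minimizing a
second functional given by a point of the face is extreme. -/
lemma aux_ext2 {C : Set (Pt 3)} (hC : SphConvex C)
    (hpair : ∀ p ∈ C, ∀ q ∈ C, sdist p q ≤ π/2)
    {y : Pt 3} (hy : ‖y‖ = 1) (hnn : ∀ p ∈ C, 0 ≤ ⟪y, p⟫)
    {u e : Pt 3} (hu : u ∈ C) (hyu : ⟪y, u⟫ = 0)
    (he : e ∈ C) (hye : ⟪y, e⟫ = 0)
    (hmin : ∀ p ∈ C, ⟪y, p⟫ = 0 → ⟪u, e⟫ ≤ ⟪u, p⟫) : ExtremePt C e := by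
  obtain ⟨hsub, hanti, harc⟩ := hC
  refine ⟨he, ?_, ?_, ?_⟩
  · exact fun x hx => hsub hx.1
  · intro x hx hnx
    exact hanti x hx.1 hnx.1
  · intro a haC b hbC z hz honarc
    have hzC : z ∈ C := harc a haC.1 b hbC.1 z hz honarc
    refine ⟨hzC, ?_⟩
    intro hze
    rw [Set.mem_singleton_iff] at hze
    subst hze
    have hane : z ≠ a := fun h => haC.2 (Set.mem_singleton_iff.mpr h.symm)
    have hbne : z ≠ b := fun h => hbC.2 (Set.mem_singleton_iff.mpr h.symm)
    obtain ⟨p, q, hp, hq, hpq, hdec⟩ := aux_core (hsub haC.1) (hsub hbC.1) hz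
      (hpair a haC.1 b hbC.1) honarc hane hbne
    have hexp : ∀ w : Pt 3, ⟪w, z⟫ = p * ⟪w, a⟫ + q * ⟪w, b⟫ := by
      intro w
      rw [hdec, inner_add_right, real_inner_smul_right, real_inner_smul_right]
    -- the endpoints lie in the face
    have hya : ⟪y, a⟫ = 0 := by
      have h1 := hnn a haC.1
      have h2 := hnn b hbC.1
      have h3 := hexp y
      rw [hye] at h3
      nlinarith
    have hyb : ⟪y, b⟫ = 0 := by
      have h1 := hnn a haC.1
      have h2 := hnn b hbC.1
      have h3 := hexp y
      rw [hye] at h3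
      nlinarith
    have hue0 : 0 ≤ ⟪u, z⟫ :=
      aux_inner_nonneg (hsub hu) (hsub hzC) (hpair u hu z hzC)
    have h1 : ⟪u, z⟫ ≤ ⟪u, a⟫ := hmin a haC.1 hya
    have h2 : ⟪u, z⟫ ≤ ⟪u, b⟫ := hmin b hbC.1 hyb
    have h3 := hexp u
    have hue : ⟪u, z⟫ = 0 := by nlinarith
    have hua : ⟪u, a⟫ = 0 := by nlinarith
    have hub : ⟪u, b⟫ = 0 := by nlinarith
    -- now a, b are both orthogonal to the orthonormal pair u, y
    have huy' : ⟪u, y⟫ = 0 := by rw [real_inner_comm]; exact hyu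
    have hab : a = b ∨ a = -b :=
      aux_orth3 (hsub hu) hy (hsub haC.1) (hsub hbC.1) huy' hua hya hub hyb
    rcases hab with hab | hab
    · -- a = b forces z = a
      subst hab
      have : sdist a z = 0 := by
        have h4 : sdist a a = 0 := aux_sdist_self (hsub haC.1)
        have h5 := honarc
        unfold OnArc at h5
        rw [h4] at h5
        have := aux_sdist_nonneg a z
        have := aux_sdist_nonneg z a
        have hcomm := aux_sdist_comm a z
        linarith
      exact hane (aux_sdist_eq_zero (hsub haC.1) hz this).symm
    · -- a = -b contradicts the no-antipodes property
      have : -a ∈ C := by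
        have : -a = b := by rw [hab]; simp
        rw [this]; exact hbC.1
      exact hanti a haC.1 this

lemma aux_sdist_continuous {n : ℕ} :
    Continuous fun p : Pt n × Pt n => sdist p.1 p.2 := by
  apply Real.continuous_arccos.comp
  exact continuous_inner

end Aux

theorem diam_extreme_points_eq (C : Set (Pt 3)) (hC : SphConvexBody C)
    (h : sdiam C ≤ π/2) : sdiam {e | ExtremePt C e} = sdiam C := by
  obtain ⟨hclosed, hconv, hint⟩ := hC
  have hCsub : C ⊆ uSphere 3 := hconv.1
  have hCne : C.Nonempty := ⟨hint.choose, hint.choose_spec.1⟩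
  -- compactness of C
  have hCbdd : Bornology.IsBounded C := by
    apply (Metric.isBounded_closedBall (x := (0 : Pt 3)) (r := 1)).subset
    intro x hx
    have : ‖x‖ = 1 := hCsub hx
    simp [Metric.mem_closedBall, dist_eq_norm, this]
  have hCcomp : IsCompact C := Metric.isCompact_of_isClosed_isBounded hclosed hCbdd
  -- the set of realized distances
  set S : Set ℝ := {t | ∃ x ∈ C, ∃ y ∈ C, t = sdist x y} with hS
  have hSimage : S = (fun p : Pt 3 × Pt 3 => sdist p.1 p.2) '' (C ×ˢ C) := by
    ext t
    constructor
    · rintro ⟨x, hx, y, hy, rfl⟩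
      exact ⟨(x, y), ⟨hx, hy⟩, rfl⟩
    · rintro ⟨⟨x, y⟩, ⟨hx, hy⟩, rfl⟩
      exact ⟨x, hx, y, hy, rfl⟩
  have hScomp : IsCompact S := by
    rw [hSimage]
    exact (hCcomp.prod hCcomp).image aux_sdist_continuous
  have hSne : S.Nonempty := by
    obtain ⟨x, hx⟩ := hCne
    exact ⟨sdist x x, x, hx, x, hx, rfl⟩
  have hDdef : sdiam C = sSup S := rfl
  have hDS : sSup S ∈ S := hScomp.sSup_mem hSne
  set D := sSup S with hD
  obtain ⟨x, hx, y, hy, hxy⟩ := hDS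
  have hbddS : BddAbove S := hScomp.bddAbove
  have hle : ∀ p ∈ C, ∀ q ∈ C, sdist p q ≤ D := by
    intro p hp q hq
    exact le_csSup hbddS ⟨p, hp, q, hq, rfl⟩
  have hDpi : D ≤ π/2 := by rw [hDdef] at h; exact h
  have hpair : ∀ p ∈ C, ∀ q ∈ C, sdist p q ≤ π/2 := by
    intro p hp q hq
    exact le_trans (hle p hp q hq) hDpi
  have hD0 : 0 ≤ D := by rw [hxy]; exact aux_sdist_nonneg x y
  -- key step: the diameter is realized by a pair of extreme points
  have key : ∃ x' y', ExtremePt C x' ∧ ExtremePt C y' ∧ sdist x' y' = D := by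
    have hcosnn : 0 ≤ Real.cos D :=
      Real.cos_nonneg_of_mem_Icc ⟨by linarith [Real.pi_pos], hDpi⟩
    have hmono : ∀ m : Pt 3, m ∈ C → ∀ p ∈ C, Real.cos D ≤ ⟪m, p⟫ := by
      intro m hm p hp
      rw [← aux_cos_sdist (hCsub hm) (hCsub hp)]
      apply Real.cos_le_cos_of_nonneg_of_le_pi (aux_sdist_nonneg m p)
        (by linarith [Real.pi_pos]) (hle m hm p hp)
    rcases lt_or_eq_of_le hcosnn with hcpos | hc0
    · -- positive cosine: both endpoints of a diameter are extreme
      have hyx : ⟪y, x⟫ = Real.cos D := by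
        rw [← aux_cos_sdist (hCsub hy) (hCsub hx), ← aux_sdist_comm, ← hxy]
      have hxyin : ⟪x, y⟫ = Real.cos D := by
        rw [← aux_cos_sdist (hCsub hx) (hCsub hy), ← hxy]
      refine ⟨x, y, ?_, ?_, hxy.symm⟩
      · exact aux_ext1 ⟨hconv.1, hconv.2.1, hconv.2.2⟩ hpair y hcpos
          (hmono y hy) hx hyx
      · exact aux_ext1 ⟨hconv.1, hconv.2.1, hconv.2.2⟩ hpair x hcpos
          (hmono x hx) hy hxyin
    · -- cos D = 0, i.e. D = π/2 : pass to faces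
      have hc0' : Real.cos D = 0 := hc0.symm
      have hnn : ∀ m : Pt 3, m ∈ C → ∀ p ∈ C, 0 ≤ ⟪m, p⟫ := by
        intro m hm p hp
        rw [← hc0']; exact hmono m hm p hp
      have hyx0 : ⟪y, x⟫ = 0 := by
        rw [← hc0', ← aux_cos_sdist (hCsub hy) (hCsub hx), ← aux_sdist_comm, ← hxy]
      -- the face F of C cut by y
      set F : Set (Pt 3) := {p ∈ C | ⟪y, p⟫ = 0} with hF
      have hFcomp : IsCompact F := by
        apply hCcomp.of_isClosed_subset
        · exact hclosed.inter (isClosed_eq (continuous_const.inner continuous_id) continuous_const)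
        · exact Set.sep_subset _ _
      have hFne : F.Nonempty := ⟨x, hx, hyx0⟩
      obtain ⟨e₁, he₁F, hmin₁⟩ := hFcomp.exists_isMinOn hFne
        ((continuous_const.inner continuous_id).continuousOn :
          ContinuousOn (fun p : Pt 3 => ⟪x, p⟫) F)
      have he₁ : ExtremePt C e₁ := by
        apply aux_ext2 ⟨hconv.1, hconv.2.1, hconv.2.2⟩ hpair (hCsub hy)
          (hnn y hy) hx hyx0 he₁F.1 he₁F.2
        intro p hp hyp
        exact hmin₁ ⟨hp, hyp⟩
      -- the face G of C cut by e₁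
      have he₁C : e₁ ∈ C := he₁F.1
      have he₁y : ⟪e₁, y⟫ = 0 := by rw [real_inner_comm]; exact he₁F.2
      set G : Set (Pt 3) := {p ∈ C | ⟪e₁, p⟫ = 0} with hG
      have hGcomp : IsCompact G := by
        apply hCcomp.of_isClosed_subset
        · exact hclosed.inter (isClosed_eq (continuous_const.inner continuous_id) continuous_const)
        · exact Set.sep_subset _ _
      have hGne : G.Nonempty := ⟨y, hy, he₁y⟩
      obtain ⟨e₂, he₂G, hmin₂⟩ := hGcomp.exists_isMinOn hGne
        ((continuous_const.inner continuous_id).continuousOn :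
          ContinuousOn (fun p : Pt 3 => ⟪y, p⟫) G)
      have he₂ : ExtremePt C e₂ := by
        apply aux_ext2 ⟨hconv.1, hconv.2.1, hconv.2.2⟩ hpair (hCsub he₁C)
          (hnn e₁ he₁C) hy he₁y he₂G.1 he₂G.2
        intro p hp hyp
        exact hmin₂ ⟨hp, hyp⟩
      refine ⟨e₁, e₂, he₁, he₂, ?_⟩
      -- sdist e₁ e₂ = π/2 = D
      have hDval : D = π/2 := by
        by_contra hne
        have hDlt : D < π/2 := lt_of_le_of_ne hDpi hne
        have : 0 < Real.cos D := Real.cos_pos_of_mem_Ioo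
          ⟨by linarith [Real.pi_pos], hDlt⟩
        linarith
      have : sdist e₁ e₂ = π/2 := by
        unfold sdist
        rw [he₂G.2]
        exact Real.arccos_zero
      rw [this, hDval]
  obtain ⟨x', y', hx', hy', hxy'⟩ := key
  -- conclude by antisymmetry
  set SE : Set ℝ := {t | ∃ a ∈ {e | ExtremePt C e}, ∃ b ∈ {e | ExtremePt C e}, t = sdist a b}
    with hSE
  have hSEdef : sdiam {e | ExtremePt C e} = sSup SE := rfl
  have hSEsub : SE ⊆ S := by
    rintro t ⟨a, ha, b, hb, rfl⟩
    exact ⟨a, ha.1, b, hb.1, rfl⟩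
  rw [hSEdef, hDdef]
  apply le_antisymm
  · apply Real.sSup_le
    · rintro t ⟨a, ha, b, hb, rfl⟩
      exact hle a ha.1 b hb.1
    · exact hD0
  · apply le_csSup (hbddS.mono hSEsub)
    exact ⟨x', hx', y', hy', hxy'.symm⟩
end
end
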